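/- arXiv:2105.03335 — 10 statements merged into one kernel-verified Lean document; each statement's English description precedes it below -/
import Mathlib

section
/- Let S be a semilattice (join-semilattice) and Q a partial order. If f : Q → S is a monotone map whose image consists of join-irreducible elements of S, then there is a unique semilattice homomorphism f⊔ from the semilattice Q⊔ of finite nonempty subsets of Q (ordered by: A ≤ B iff every element of A is below some element of B, with join given by union) to S extending f. -/
/-- if `f : Q → S` is a monotone map from a poset `Q` to a join-semilattice
`S` whose image consists of join-irreducible elements, then there is a unique semilattice
homomorphism `F = f⊔` from `Q⊔` (the nonempty finite subsets of `Q`, with `A ≤ B` iff every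
element of `A` is below some element of `B` and join given by union) to `S` extending `f`.
(Being a homomorphism is expressed by preserving joins and being monotone for the
`≤*`-preorder, so that `F` descends to the quotient `Q⊔`.) -/
theorem exists_unique_semilattice_hom_extension {Q S : Type*} [PartialOrder Q]
    [DecidableEq Q] [SemilatticeSup S] (f : Q → S) (hmono : Monotone f)
    (hirr : ∀ q : Q, ∀ y z : S, y ⊔ z = f q → y = f q ∨ z = f q) :
    ∃! F : {A : Finset Q // A.Nonempty} → S,
      (∀ q : Q, F ⟨{q}, Finset.singleton_nonempty q⟩ = f q) ∧
      (∀ A B : {A : Finset Q // A.Nonempty},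
        F ⟨A.1 ∪ B.1, A.2.mono Finset.subset_union_left⟩ = F A ⊔ F B) ∧
      (∀ A B : {A : Finset Q // A.Nonempty},
        (∀ a ∈ A.1, ∃ b ∈ B.1, a ≤ b) → F A ≤ F B) := by
  refine ⟨fun A => A.1.sup' A.2 f, ⟨?_, ?_, ?_⟩, ?_⟩
  · intro q; simp
  · intro A B; exact Finset.sup'_union A.2 B.2 f
  · intro A B h
    apply Finset.sup'_le
    intro a ha
    obtain ⟨b, hb, hab⟩ := h a ha
    exact le_trans (hmono hab) (Finset.le_sup' f hb)
  · rintro F ⟨hsing, hunion, -⟩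
    funext A
    obtain ⟨A, hA⟩ := A
    induction hA using Finset.Nonempty.cons_induction with
    | singleton a => simpa using hsing a
    | cons a s ha hs ih =>
      have h1 : F ⟨Finset.cons a s ha, Finset.cons_nonempty ha⟩ =
          F ⟨({a} : Finset Q) ∪ s, (Finset.singleton_nonempty a).mono Finset.subset_union_left⟩ := by
        congr 1
        exact Subtype.ext (by simp [Finset.cons_eq_insert, Finset.insert_eq, -Finset.singleton_union])
      rw [h1, hunion ⟨{a}, Finset.singleton_nonempty a⟩ ⟨s, hs⟩, hsing a, ih]
      rw [Finset.sup'_cons]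
end

section
/- Let S be a distributive join-semilattice and Q a partial order. If f : Q → S is an order embedding whose image consists of join-irreducible elements of S, then the induced semilattice homomorphism f⊔ : Q⊔ → S (sending a finite nonempty subset A of Q to the join of f over A) is an order embedding. -/
/-- if `S` is a distributive join-semilattice and `f : Q → S` is an order
embedding of a poset `Q` whose image consists of join-irreducible elements, then the
induced semilattice homomorphism `f⊔ : Q⊔ → S` (sending a nonempty finite subset `A` of
`Q` to the join of `f` over `A`) is an order embedding: `sup f A ≤ sup f B` iff `A ≤* B`. -/
theorem joinHom_orderEmbedding {Q S : Type*} [PartialOrder Q] [SemilatticeSup S]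
    (f : Q → S)
    (hemb : ∀ q r : Q, f q ≤ f r ↔ q ≤ r)
    (hdist : ∀ x y z : S, x ≤ y ⊔ z → ∃ y' z' : S, y' ≤ y ∧ z' ≤ z ∧ x = y' ⊔ z')
    (hirr : ∀ q : Q, ∀ y z : S, f q ≤ y ⊔ z → f q ≤ y ∨ f q ≤ z) :
    ∀ (A B : Finset Q) (hA : A.Nonempty) (hB : B.Nonempty),
      A.sup' hA f ≤ B.sup' hB f ↔ ∀ a ∈ A, ∃ b ∈ B, a ≤ b := by
  have key : ∀ (B : Finset Q) (hB : B.Nonempty) (q : Q),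
      f q ≤ B.sup' hB f → ∃ b ∈ B, q ≤ b := by
    intro B hB
    induction hB using Finset.Nonempty.cons_induction with
    | singleton b => intro q h; exact ⟨b, Finset.mem_singleton_self b,
        (hemb q b).mp (by simpa using h)⟩
    | cons b B hb hBne ih =>
      intro q h
      rw [Finset.sup'_cons (H := hBne)] at h
      rcases hirr q _ _ h with h1 | h2
      · exact ⟨b, Finset.mem_cons_self b B, (hemb q b).mp h1⟩
      · obtain ⟨c, hc, hqc⟩ := ih q h2
        exact ⟨c, Finset.mem_cons_of_mem hc, hqc⟩
  intro A B hA hB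
  constructor
  · intro h a ha
    exact key B hB a (le_trans (Finset.le_sup' f ha) h)
  · intro h
    apply Finset.sup'_le
    intro a ha
    obtain ⟨b, hb, hab⟩ := h a ha
    exact le_trans ((hemb a b).mpr hab) (Finset.le_sup' f hb)
end

section
/- For any poset Q, the semilattice Q⊔ of finite nonempty subsets of Q (with A ≤ B iff every element of A is below some element of B, join given by union, quotiented by equivalence), with a new bottom element adjoined, is a distributive lattice-like structure: it is a distributive join-semilattice whose join-irreducible non-bottom elements are exactly the classes of singleton subsets; in particular the poset of join-irreducible elements of Q⊔ is isomorphic to Q. -/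
/-- The preorder `A ≤* B` on finite subsets of `Q`: every element of `A` is below some
element of `B`.  (The empty set is the adjoined bottom element.) -/
def FinsetLe {Q : Type*} [PartialOrder Q] (A B : Finset Q) : Prop :=
  ∀ a ∈ A, ∃ b ∈ B, a ≤ b

/-- The associated equivalence (equality in the quotient `Q⊔` with bottom). -/
def FinsetEquiv {Q : Type*} [PartialOrder Q] (A B : Finset Q) : Prop :=
  FinsetLe A B ∧ FinsetLe B A

/-- The associated strict order. -/
def FinsetLt {Q : Type*} [PartialOrder Q] (A B : Finset Q) : Prop :=
  FinsetLe A B ∧ ¬ FinsetLe B A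

/-- for any poset `Q`, the semilattice `Q⊔` of finite subsets of `Q`
(nonempty finite subsets with a bottom `∅` adjoined), with `≤*` and join `∪`, is a
distributive join-semilattice whose join-irreducible non-bottom elements are exactly the
classes of singletons; in particular its poset of join-irreducible elements is isomorphic
to `Q` via `q ↦ {q}`. -/
theorem finset_semilattice_distributive_irreducibles {Q : Type*} [PartialOrder Q]
    [DecidableEq Q] :
    (∀ A B C : Finset Q, FinsetLe A (B ∪ C) →
        ∃ B' C' : Finset Q, FinsetLe B' B ∧ FinsetLe C' C ∧ FinsetEquiv A (B' ∪ C')) ∧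
      (∀ A : Finset Q, A.Nonempty →
        ((¬ ∃ B C : Finset Q, FinsetLt B A ∧ FinsetLt C A ∧ FinsetEquiv A (B ∪ C)) ↔
          ∃ q : Q, FinsetEquiv A {q})) ∧
      (∀ q r : Q, q ≤ r ↔ FinsetLe ({q} : Finset Q) {r}) := by
  classical
  refine ⟨?_, ?_, ?_⟩
  · intro A B C h
    refine ⟨A.filter (fun a => ∃ b ∈ B, a ≤ b),
            A.filter (fun a => ∃ c ∈ C, a ≤ c), ?_, ?_, ?_, ?_⟩
    · intro a ha
      exact (Finset.mem_filter.1 ha).2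
    · intro a ha
      exact (Finset.mem_filter.1 ha).2
    · intro a ha
      obtain ⟨b, hb, hab⟩ := h a ha
      rcases Finset.mem_union.1 hb with hb' | hb'
      · exact ⟨a, Finset.mem_union_left _ (Finset.mem_filter.2 ⟨ha, b, hb', hab⟩), le_refl a⟩
      · exact ⟨a, Finset.mem_union_right _ (Finset.mem_filter.2 ⟨ha, b, hb', hab⟩), le_refl a⟩
    · intro a ha
      rcases Finset.mem_union.1 ha with h' | h' <;>
        exact ⟨a, (Finset.mem_filter.1 h').1, le_refl a⟩
  · intro A hA
    constructor
    · intro hirr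
      by_contra hne
      push_neg at hne
      obtain ⟨q, hq, hqmax⟩ := A.exists_maximal hA
      have hqA : FinsetLe {q} A := by
        intro b hb
        rw [Finset.mem_singleton] at hb
        exact ⟨q, hq, le_of_eq hb⟩
      have hAq : ¬ FinsetLe A {q} := fun hle => hne q ⟨hle, hqA⟩
      have hex : ∃ a ∈ A, ¬ a ≤ q := by
        by_contra h
        push_neg at h
        exact hAq fun a ha => ⟨q, Finset.mem_singleton_self q, h a ha⟩
      obtain ⟨a0, ha0, ha0q⟩ := hex
      apply hirr
      refine ⟨{q}, A.filter (fun a => ¬ a ≤ q), ⟨hqA, hAq⟩, ⟨?_, ?_⟩, ?_, ?_⟩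
      · intro a ha
        exact ⟨a, (Finset.mem_filter.1 ha).1, le_refl a⟩
      · intro hle
        obtain ⟨c, hc, hqc⟩ := hle q hq
        obtain ⟨hcA, hcq⟩ := Finset.mem_filter.1 hc
        have : q < c := lt_of_le_of_ne hqc (fun he => hcq (he ▸ le_refl q))
        exact hcq (hqmax hcA hqc)
      · intro a ha
        by_cases hle : a ≤ q
        · exact ⟨q, Finset.mem_union_left _ (Finset.mem_singleton_self q), hle⟩
        · exact ⟨a, Finset.mem_union_right _ (Finset.mem_filter.2 ⟨ha, hle⟩), le_refl a⟩
      · intro b hb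
        rcases Finset.mem_union.1 hb with h' | h'
        · rw [Finset.mem_singleton] at h'
          exact ⟨q, hq, le_of_eq h'⟩
        · exact ⟨b, (Finset.mem_filter.1 h').1, le_refl b⟩
    · rintro ⟨q, hAq, hqA⟩ ⟨B, C, hB, hC, hABC, hBCA⟩
      obtain ⟨a, ha, hqa⟩ := hqA q (Finset.mem_singleton_self q)
      obtain ⟨x, hx, hax⟩ := hABC a ha
      obtain ⟨a', ha', hxa'⟩ := hBCA x hx
      obtain ⟨y, hy, ha'y⟩ := hAq a' ha'
      rw [Finset.mem_singleton] at hy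
      have hx' : x = q := le_antisymm (hxa'.trans (ha'y.trans (le_of_eq hy))) (hqa.trans hax)
      have hAle : ∀ a'' ∈ A, a'' ≤ x := by
        intro a'' ha''
        obtain ⟨y, hy, h⟩ := hAq a'' ha''
        rw [Finset.mem_singleton] at hy
        exact le_trans h (le_of_eq (hy.trans hx'.symm))
      rcases Finset.mem_union.1 hx with hxB | hxC
      · exact hB.2 (fun a'' ha'' => ⟨x, hxB, hAle a'' ha''⟩)
      · exact hC.2 (fun a'' ha'' => ⟨x, hxC, hAle a'' ha''⟩)
  · intro q r
    constructor
    · intro h a ha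
      rw [Finset.mem_singleton] at ha
      subst ha
      exact ⟨r, Finset.mem_singleton_self r, h⟩
    · intro h
      obtain ⟨b, hb, h'⟩ := h q (Finset.mem_singleton_self q)
      rw [Finset.mem_singleton] at hb
      subst hb
      exact h'
end

section
/- If Q is a well-founded partial order, then the semilattice Q⊔ of finite nonempty subsets of Q ordered by A ≤ B iff every element of A is below some element of B is also well-founded. -/
open Relation Multiset
open scoped Classical

/-- Key lemma: replacing a nonempty multiset `X` by a multiset `Y` of elements each strictly
below some element of `X` is a transitive chain of `CutExpand` moves. -/
lemma transGen_cutExpand_of_forall_lt {Q : Type*} [PartialOrder Q]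
    (X Y N : Multiset Q) (hX : X ≠ 0) (hY : ∀ y ∈ Y, ∃ x ∈ X, y < x) :
    Relation.TransGen (CutExpand ((· < ·) : Q → Q → Prop)) (N + Y) (N + X) := by
  classical
  induction X using Multiset.induction generalizing Y N with
  | empty => exact absurd rfl hX
  | cons x X' ih =>
    set Y₂ := Y.filter (fun y => ∃ x' ∈ X', y < x') with hY₂
    set Y₁ := Y.filter (fun y => ¬ ∃ x' ∈ X', y < x') with hY₁
    have hsplit : Y₁ + Y₂ = Y := by
      rw [hY₁, hY₂, add_comm]; exact Multiset.filter_add_not _ Y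
    have hY₁lt : ∀ y ∈ Y₁, y < x := by
      intro y hy
      rw [hY₁, Multiset.mem_filter] at hy
      obtain ⟨hyY, hyn⟩ := hy
      obtain ⟨x', hx', hlt⟩ := hY y hyY
      rcases Multiset.mem_cons.1 hx' with h | h
      · exact h ▸ hlt
      · exact absurd ⟨x', h, hlt⟩ hyn
    have hY₂lt : ∀ y ∈ Y₂, ∃ x' ∈ X', y < x' := by
      intro y hy; rw [hY₂, Multiset.mem_filter] at hy; exact hy.2
    by_cases hX' : X' = 0
    · subst hX'
      have hY₂0 : Y₂ = 0 := by
        rw [hY₂, Multiset.filter_eq_nil]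
        rintro y - ⟨x', hx', -⟩; exact absurd hx' (Multiset.notMem_zero x')
      have step : CutExpand ((· < ·) : Q → Q → Prop) (N + Y) (N + (x ::ₘ 0)) := by
        refine ⟨Y, x, fun y hy => ?_, ?_⟩
        · rw [← hsplit, hY₂0, add_zero] at hy; exact hY₁lt y hy
        · simp only [← Multiset.singleton_add]; abel
      exact Relation.TransGen.single step
    · have step : CutExpand ((· < ·) : Q → Q → Prop) ((N + Y₁) + X') (N + (x ::ₘ X')) := by
        refine ⟨Y₁, x, hY₁lt, ?_⟩
        have : N + (x ::ₘ X') = (N + X') + {x} := by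
          simp only [← Multiset.singleton_add]; abel
        rw [this]
        abel
      have rest : Relation.TransGen (CutExpand ((· < ·) : Q → Q → Prop))
          ((N + Y₁) + Y₂) ((N + Y₁) + X') := ih Y₂ (N + Y₁) hX' hY₂lt
      have : (N + Y₁) + Y₂ = N + Y := by rw [add_assoc, hsplit]
      rw [this] at rest
      exact rest.trans (.single step)

/-- The set of maximal elements of a finite set. -/
noncomputable def maxima {Q : Type*} [PartialOrder Q] (A : Finset Q) : Finset Q :=
  A.filter (fun a => ∀ b ∈ A, ¬ a < b)

lemma maxima_subset {Q : Type*} [PartialOrder Q] (A : Finset Q) : maxima A ⊆ A :=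
  Finset.filter_subset _ _

lemma maxima_max {Q : Type*} [PartialOrder Q] {A : Finset Q} {a : Q} (h : a ∈ maxima A) :
    ∀ b ∈ A, ¬ a < b := (Finset.mem_filter.1 h).2

lemma exists_le_maxima {Q : Type*} [PartialOrder Q] {A : Finset Q} {a : Q} (h : a ∈ A) :
    ∃ m ∈ maxima A, a ≤ m := by
  classical
  obtain ⟨m, hmS, hmax⟩ := (A.filter (a ≤ ·)).exists_maximal
    ⟨a, Finset.mem_filter.2 ⟨h, le_refl a⟩⟩
  rw [Finset.mem_filter] at hmS
  refine ⟨m, Finset.mem_filter.2 ⟨hmS.1, fun b hb hlt => ?_⟩, hmS.2⟩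
  exact absurd (hmax (Finset.mem_filter.2 ⟨hb, hmS.2.trans hlt.le⟩) hlt.le) (not_le_of_gt hlt)

lemma val_inter_add_sdiff {Q : Type*} [DecidableEq Q] (s t : Finset Q) :
    (s ∩ t).val + (s \ t).val = s.val := by
  rw [← Finset.filter_mem_eq_inter, Finset.sdiff_eq_filter, Finset.filter_val,
    Finset.filter_val, Multiset.filter_add_not]

/-- if `Q` is a well-founded poset, then the semilattice `Q⊔` of nonempty
finite subsets of `Q`, ordered by `A ≤ B` iff every element of `A` is below some element
of `B`, is well-founded (its strict order admits no infinite descending chain). -/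
theorem finset_wellFounded {Q : Type*} [PartialOrder Q]
    (hwf : WellFounded ((· < ·) : Q → Q → Prop)) :
    WellFounded (fun A B : {A : Finset Q // A.Nonempty} =>
      (∀ a ∈ A.1, ∃ b ∈ B.1, a ≤ b) ∧ ¬ (∀ b ∈ B.1, ∃ a ∈ A.1, b ≤ a)) := by
  classical
  set f : {A : Finset Q // A.Nonempty} → Multiset Q := fun A => (maxima A.1).val with hf
  have key : ∀ A B : {A : Finset Q // A.Nonempty},
      ((∀ a ∈ A.1, ∃ b ∈ B.1, a ≤ b) ∧ ¬ (∀ b ∈ B.1, ∃ a ∈ A.1, b ≤ a)) →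
      Relation.TransGen (CutExpand ((· < ·) : Q → Q → Prop)) (f A) (f B) := by
    rintro A B ⟨hAB, hBA⟩
    set M := maxima A.1 with hM
    set N := maxima B.1 with hN
    have hMval : f A = (N ∩ M).val + (M \ N).val := by
      rw [hf]
      show M.val = _
      rw [← val_inter_add_sdiff M N]
      congr 2
      rw [Finset.inter_comm]
    have hNval : f B = (N ∩ M).val + (N \ M).val := by
      rw [hf]
      show N.val = _
      rw [← val_inter_add_sdiff N M]
    rw [hMval, hNval]
    apply transGen_cutExpand_of_forall_lt
    · intro h0
      have hsub : N \ M = ∅ := Finset.val_eq_zero.1 h0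
      rw [Finset.sdiff_eq_empty_iff_subset] at hsub
      apply hBA
      intro b hb
      obtain ⟨n, hnN, hbn⟩ := exists_le_maxima hb
      exact ⟨n, maxima_subset _ (hsub hnN), hbn⟩
    · intro y hy
      rw [Finset.mem_val, Finset.mem_sdiff] at hy
      obtain ⟨hyM, hyN⟩ := hy
      obtain ⟨b, hb, hyb⟩ := hAB y (maxima_subset _ hyM)
      obtain ⟨n, hnN, hbn⟩ := exists_le_maxima hb
      have hyn : y ≤ n := hyb.trans hbn
      have hne : y ≠ n := fun h => hyN (h ▸ hnN)
      have hlt : y < n := lt_of_le_of_ne hyn hne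
      refine ⟨n, ?_, hlt⟩
      rw [Finset.mem_val, Finset.mem_sdiff]
      refine ⟨hnN, fun hnM => ?_⟩
      exact maxima_max hyM n (maxima_subset _ hnM) hlt
  exact Subrelation.wf (fun {A B} h => key A B h) (InvImage.wf f hwf.cutExpand.transGen)
end

section
/- If Q is a well quasi-order, then the set of nonempty finite subsets of Q with the preorder A ≤ B iff every element of A is below some element of B is also a well quasi-order. -/
lemma sublistForall₂_mem {α : Type*} {r : α → α → Prop} {l₁ l₂ : List α}
    (h : List.SublistForall₂ r l₁ l₂) {a : α} (ha : a ∈ l₁) : ∃ b ∈ l₂, r a b := by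
  induction h with
  | nil => simp at ha
  | cons hr _ ih =>
    rcases List.mem_cons.mp ha with rfl | ha'
    · exact ⟨_, List.mem_cons_self, hr⟩
    · obtain ⟨b, hb, hrb⟩ := ih ha'
      exact ⟨b, List.mem_cons_of_mem _ hb, hrb⟩
  | cons_right _ ih =>
    obtain ⟨b, hb, hrb⟩ := ih ha
    exact ⟨b, List.mem_cons_of_mem _ hb, hrb⟩

/-- if `Q` is a well quasi-order (every infinite sequence contains an
increasing pair), then the nonempty finite subsets of `Q`, with `A ≤ B` iff every element
of `A` is below some element of `B`, form a well quasi-order. -/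
theorem finset_wqo {Q : Type*} [Preorder Q]
    (hwqo : ∀ f : ℕ → Q, ∃ m n : ℕ, m < n ∧ f m ≤ f n) :
    ∀ F : ℕ → {A : Finset Q // A.Nonempty},
      ∃ m n : ℕ, m < n ∧ ∀ a ∈ (F m).1, ∃ b ∈ (F n).1, a ≤ b := by
  intro F
  have hs : (Set.univ : Set Q).PartiallyWellOrderedOn (· ≤ ·) := fun f => hwqo (fun k => (f k).1)
  have hL := hs.partiallyWellOrderedOn_sublistForall₂ (· ≤ ·)
  obtain ⟨m, n, hmn, hrel⟩ := hL (fun k => ⟨(F k).1.toList, by simp⟩)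
  refine ⟨m, n, hmn, fun a ha => ?_⟩
  rw [← Finset.mem_toList] at ha
  obtain ⟨b, hb, hab⟩ := sublistForall₂_mem hrel ha
  exact ⟨b, Finset.mem_toList.mp hb, hab⟩
end

section
/- Let Q be a preorder and T(Q) the set of finite Q-labeled trees with the h-preorder ≤_h. For non-singleton finite Q-trees (T,t) and (V,v), one has (T,t) ≤_h (V,v) if and only if: either t(ε) ≤ v(ε) and T(i) ≤_h V for every immediate subtree T(i) of T, or t(ε) ≰ v(ε) and T ≤_h V(j) for some immediate subtree V(j) of V. -/
/-- A finite `Q`-labeled rooted tree: a finite nonempty prefix-closed set of finite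
strings of naturals, together with a labeling. -/
structure QTree (Q : Type*) where
  nodes : Finset (List ℕ)
  nonempty : nodes.Nonempty
  prefix_closed : ∀ σ ∈ nodes, ∀ τ : List ℕ, τ <+: σ → τ ∈ nodes
  label : List ℕ → Q

/-- The h-preorder on finite `Q`-labeled trees: `T ≤_h V` iff there is a monotone map
(w.r.t. the prefix/tree order) from `T` to `V` which is nondecreasing on labels. -/
def QTree.hle {Q : Type*} [Preorder Q] (T V : QTree Q) : Prop :=
  ∃ f : List ℕ → List ℕ,
    (∀ σ ∈ T.nodes, f σ ∈ V.nodes) ∧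
    (∀ σ ∈ T.nodes, ∀ τ ∈ T.nodes, σ <+: τ → f σ <+: f τ) ∧
    (∀ σ ∈ T.nodes, T.label σ ≤ V.label (f σ))

/-- `T'` is the immediate subtree of `T` rooted at the child `i` of the root. -/
def QTree.IsSubtree {Q : Type*} (T : QTree Q) (i : ℕ) (T' : QTree Q) : Prop :=
  [i] ∈ T.nodes ∧ (∀ σ : List ℕ, σ ∈ T'.nodes ↔ i :: σ ∈ T.nodes) ∧
    ∀ σ ∈ T'.nodes, T'.label σ = T.label (i :: σ)

lemma QTree.root_mem {Q : Type*} (T : QTree Q) : ([] : List ℕ) ∈ T.nodes := by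
  obtain ⟨σ, hσ⟩ := T.nonempty
  exact T.prefix_closed σ hσ [] (List.nil_prefix)

/-- The canonical immediate subtree at child `i`. -/
def QTree.child {Q : Type*} (T : QTree Q) (i : ℕ) (h : [i] ∈ T.nodes) : QTree Q where
  nodes := (T.nodes.filter (fun ρ => ρ.head? = some i)).image List.tail
  nonempty := ⟨[], Finset.mem_image.2 ⟨[i], Finset.mem_filter.2 ⟨h, rfl⟩, rfl⟩⟩
  prefix_closed := by
    intro σ hσ τ hτ
    simp only [Finset.mem_image, Finset.mem_filter] at hσ ⊢
    obtain ⟨ρ, ⟨hρ, hh⟩, ht⟩ := hσ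
    cases ρ with
    | nil => simp at hh
    | cons a l =>
      simp only [List.head?_cons, Option.some.injEq] at hh
      simp only [List.tail_cons] at ht
      rw [hh] at hρ; subst ht
      exact ⟨i :: τ, ⟨T.prefix_closed _ hρ _ (List.cons_prefix_cons.2 ⟨rfl, hτ⟩), rfl⟩, rfl⟩
  label := fun σ => T.label (i :: σ)

lemma QTree.mem_child {Q : Type*} (T : QTree Q) (i : ℕ) (h : [i] ∈ T.nodes) (σ : List ℕ) :
    σ ∈ (T.child i h).nodes ↔ i :: σ ∈ T.nodes := by
  constructor
  · simp only [child, Finset.mem_image, Finset.mem_filter]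
    rintro ⟨ρ, ⟨hρ, hh⟩, ht⟩
    cases ρ with
    | nil => simp at hh
    | cons a l =>
      simp only [List.head?_cons, Option.some.injEq] at hh
      simp only [List.tail_cons] at ht
      rw [hh] at hρ; subst ht; exact hρ
  · intro h'
    exact Finset.mem_image.2 ⟨i :: σ, Finset.mem_filter.2 ⟨h', rfl⟩, rfl⟩

lemma QTree.isSubtree_child {Q : Type*} (T : QTree Q) (i : ℕ) (h : [i] ∈ T.nodes) :
    T.IsSubtree i (T.child i h) :=
  ⟨h, fun σ => T.mem_child i h σ, fun _ _ => rfl⟩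

/-- inductive characterization of the h-preorder on non-singleton trees:
`T ≤_h V` iff either `t(ε) ≤ v(ε)` and every immediate subtree `T(i)` of `T` satisfies
`T(i) ≤_h V`, or `t(ε) ≰ v(ε)` and `T ≤_h V(j)` for some immediate subtree `V(j)`. -/
theorem qtree_hle_iff {Q : Type*} [Preorder Q] (T V : QTree Q)
    (hT : ∃ σ ∈ T.nodes, σ ≠ ([] : List ℕ))
    (hV : ∃ σ ∈ V.nodes, σ ≠ ([] : List ℕ)) :
    T.hle V ↔
      ((T.label [] ≤ V.label [] ∧ ∀ (i : ℕ) (T' : QTree Q), T.IsSubtree i T' → T'.hle V) ∨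
        (¬ T.label [] ≤ V.label [] ∧
          ∃ (j : ℕ) (V' : QTree Q), V.IsSubtree j V' ∧ T.hle V')) := by
  constructor
  · rintro ⟨f, hmem, hmono, hlab⟩
    by_cases hle : T.label [] ≤ V.label []
    · left
      refine ⟨hle, ?_⟩
      rintro i T' ⟨hi, hmemT', hlabT'⟩
      refine ⟨fun σ => f (i :: σ), ?_, ?_, ?_⟩
      · intro σ hσ; exact hmem _ ((hmemT' σ).1 hσ)
      · intro σ hσ τ hτ hp
        exact hmono _ ((hmemT' σ).1 hσ) _ ((hmemT' τ).1 hτ)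
          (List.cons_prefix_cons.2 ⟨rfl, hp⟩)
      · intro σ hσ; rw [hlabT' σ hσ]; exact hlab _ ((hmemT' σ).1 hσ)
    · right
      refine ⟨hle, ?_⟩
      have hf0 := hlab [] T.root_mem
      have h0 : f [] ≠ [] := fun h' => hle (by rwa [h'] at hf0)
      obtain ⟨j, ρ, hjρ⟩ : ∃ j ρ, f [] = j :: ρ := by
        cases h' : f [] with
        | nil => exact absurd h' h0
        | cons a l => exact ⟨a, l, rfl⟩
      have hj : [j] ∈ V.nodes := by
        refine V.prefix_closed _ (hmem [] T.root_mem) [j] ?_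
        rw [hjρ]; exact List.cons_prefix_cons.2 ⟨rfl, List.nil_prefix⟩
      have hcons : ∀ σ ∈ T.nodes, f σ = j :: (f σ).tail := by
        intro σ hσ
        have hp : f [] <+: f σ := hmono [] T.root_mem σ hσ (List.nil_prefix)
        rw [hjρ] at hp
        cases h' : f σ with
        | nil => rw [h'] at hp; simp [List.prefix_nil] at hp
        | cons a l =>
          rw [h'] at hp
          obtain ⟨he, -⟩ := List.cons_prefix_cons.1 hp
          simp [he]
      refine ⟨j, V.child j hj, V.isSubtree_child j hj, fun σ => (f σ).tail, ?_, ?_, ?_⟩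
      · intro σ hσ
        rw [V.mem_child j hj, ← hcons σ hσ]
        exact hmem σ hσ
      · intro σ hσ τ hτ hp
        have := hmono σ hσ τ hτ hp
        rw [hcons σ hσ, hcons τ hτ] at this
        exact (List.cons_prefix_cons.1 this).2
      · intro σ hσ
        have := hlab σ hσ
        rw [hcons σ hσ] at this
        exact this
  · rintro (⟨hle, hsub⟩ | ⟨hle, j, V', ⟨hj, hmemV', hlabV'⟩, g, hg1, hg2, hg3⟩)
    · choose F hF1 hF2 hF3 using
        fun (i : ℕ) (h : [i] ∈ T.nodes) => hsub i (T.child i h) (T.isSubtree_child i h)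
      classical
      refine ⟨fun σ => match σ with
        | [] => []
        | i :: σ' => if h : [i] ∈ T.nodes then F i h σ' else [], ?_, ?_, ?_⟩
      · intro σ hσ
        match σ with
        | [] => exact V.root_mem
        | i :: σ' =>
          have hi : [i] ∈ T.nodes :=
            T.prefix_closed _ hσ [i] (List.cons_prefix_cons.2 ⟨rfl, List.nil_prefix⟩)
          have hσ' : σ' ∈ (T.child i hi).nodes := (T.mem_child i hi σ').2 hσ
          simp only [dif_pos hi]
          exact hF1 i hi σ' hσ'
      · intro σ hσ τ hτ hp
        match σ, τ with
        | [], _ => exact List.nil_prefix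
        | i :: σ', [] => simp [List.prefix_nil] at hp
        | i :: σ', a :: τ' =>
          obtain ⟨he, hp'⟩ := List.cons_prefix_cons.1 hp
          subst he
          have hi : [i] ∈ T.nodes :=
            T.prefix_closed _ hσ [i] (List.cons_prefix_cons.2 ⟨rfl, List.nil_prefix⟩)
          have hσ' : σ' ∈ (T.child i hi).nodes := (T.mem_child i hi σ').2 hσ
          have hτ' : τ' ∈ (T.child i hi).nodes := (T.mem_child i hi τ').2 hτ
          simp only [dif_pos hi]
          exact hF2 i hi σ' hσ' τ' hτ' hp'
      · intro σ hσ
        match σ with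
        | [] => exact hle
        | i :: σ' =>
          have hi : [i] ∈ T.nodes :=
            T.prefix_closed _ hσ [i] (List.cons_prefix_cons.2 ⟨rfl, List.nil_prefix⟩)
          have hσ' : σ' ∈ (T.child i hi).nodes := (T.mem_child i hi σ').2 hσ
          simp only [dif_pos hi]
          exact hF3 i hi σ' hσ'
    · refine ⟨fun σ => j :: g σ, ?_, ?_, ?_⟩
      · intro σ hσ; exact (hmemV' (g σ)).1 (hg1 σ hσ)
      · intro σ hσ τ hτ hp
        exact List.cons_prefix_cons.2 ⟨rfl, hg2 σ hσ τ hτ hp⟩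
      · intro σ hσ
        have := hg3 σ hσ
        rwa [hlabV' (g σ) (hg1 σ hσ)] at this
end

section
/- Any two h-equivalent minimal Q-forests are isomorphic (as labeled forests). -/
/-- A finite `Q`-labeled forest: a finite set of nonempty finite strings of naturals,
closed under nonempty prefixes, together with a labeling. -/
structure QForest (Q : Type*) where
  nodes : Finset (List ℕ)
  not_root : ([] : List ℕ) ∉ nodes
  prefix_closed : ∀ σ ∈ nodes, ∀ τ : List ℕ, τ <+: σ → τ ≠ [] → τ ∈ nodes
  label : List ℕ → Q

/-- The h-preorder on finite `Q`-labeled forests: `F ≤_h G` iff there is a monotone map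
(w.r.t. the prefix order) from `F` to `G` which is nondecreasing on labels. -/
def QForest.hle {Q : Type*} [Preorder Q] (F G : QForest Q) : Prop :=
  ∃ f : List ℕ → List ℕ,
    (∀ σ ∈ F.nodes, f σ ∈ G.nodes) ∧
    (∀ σ ∈ F.nodes, ∀ τ ∈ F.nodes, σ <+: τ → f σ <+: f τ) ∧
    (∀ σ ∈ F.nodes, F.label σ ≤ G.label (f σ))

/-- A `Q`-forest is minimal if it is not h-equivalent to a `Q`-forest of strictly
smaller cardinality. -/
def QForest.Minimal {Q : Type*} [Preorder Q] (F : QForest Q) : Prop :=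
  ∀ G : QForest Q, F.hle G → G.hle F → F.nodes.card ≤ G.nodes.card

namespace QForestIso

/-- chain of nonempty prefixes of `s` lying in `S`, in increasing length order. -/
def pchain (S : Finset (List ℕ)) (s : List ℕ) : List (List ℕ) :=
  (List.range s.length).filterMap
    (fun k => if s.take (k+1) ∈ S ∧ k < s.length then some (s.take (k+1)) else none)

lemma mem_pchain {S : Finset (List ℕ)} {s t : List ℕ} :
    t ∈ pchain S s ↔ t ∈ S ∧ t <+: s ∧ t ≠ [] := by
  constructor
  · intro ht
    rw [pchain, List.mem_filterMap] at ht
    obtain ⟨k, hk, hf⟩ := ht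
    rw [List.mem_range] at hk
    split_ifs at hf with hc
    · injection hf with hf
      subst hf
      refine ⟨hc.1, List.take_prefix _ _, ?_⟩
      have hl : (s.take (k+1)).length = k+1 := by
        rw [List.length_take]; omega
      intro h0; rw [h0] at hl; simp at hl
  · rintro ⟨htS, htp, htne⟩
    rw [pchain, List.mem_filterMap]
    have hlen : t.length ≤ s.length := htp.length_le
    have hpos : 0 < t.length := List.length_pos_iff.mpr htne
    refine ⟨t.length - 1, by rw [List.mem_range]; omega, ?_⟩
    have h1 : t.length - 1 + 1 = t.length := by omega
    have h2 : s.take t.length = t := (List.prefix_iff_eq_take.mp htp).symm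
    rw [h1, h2, if_pos ⟨htS, by omega⟩]

lemma pchain_prefix {S : Finset (List ℕ)} {r s : List ℕ} (h : r <+: s) :
    pchain S r <+: pchain S s := by
  obtain ⟨u, rfl⟩ := h
  rw [pchain, pchain, List.length_append, List.range_add, List.filterMap_append]
  have heq : (List.range r.length).filterMap
      (fun k => if (r ++ u).take (k+1) ∈ S ∧ k < r.length + u.length then some ((r ++ u).take (k+1)) else none)
      = (List.range r.length).filterMap
      (fun k => if r.take (k+1) ∈ S ∧ k < r.length then some (r.take (k+1)) else none) := by
    apply List.filterMap_congr
    intro k hk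
    rw [List.mem_range] at hk
    have ht : (r ++ u).take (k+1) = r.take (k+1) := List.take_append_of_le_length (by omega)
    rw [ht]
    by_cases hS : r.take (k+1) ∈ S
    · rw [if_pos ⟨hS, by omega⟩, if_pos ⟨hS, hk⟩]
    · rw [if_neg (by tauto), if_neg (by tauto)]
  rw [heq]
  exact List.prefix_append _ _

lemma pchain_concat {S : Finset (List ℕ)} {s : List ℕ} (hs : s ∈ S) (hne : s ≠ []) :
    ∃ l, pchain S s = l ++ [s] := by
  have hpos : 0 < s.length := List.length_pos_iff.mpr hne
  obtain ⟨m, hm⟩ : ∃ m, s.length = m + 1 := ⟨s.length - 1, by omega⟩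
  refine ⟨(List.range m).filterMap
      (fun k => if s.take (k+1) ∈ S ∧ k < s.length then some (s.take (k+1)) else none), ?_⟩
  rw [pchain, hm, List.range_succ, List.filterMap_append]
  congr 1
  have hts : s.take (m+1) = s := by rw [← hm]; exact List.take_length
  have hms : m < s.length := by omega
  simp [hts, hs, hms]

lemma pchain_nodup (S : Finset (List ℕ)) (s : List ℕ) : (pchain S s).Nodup := by
  apply List.Nodup.filterMap _ List.nodup_range
  intro a a' b hb hb'
  split_ifs at hb with h1
  · split_ifs at hb' with h2
    · rw [Option.mem_def, Option.some_inj] at hb hb'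
      have l1 : b.length = a + 1 := by rw [← hb, List.length_take]; omega
      have l2 : b.length = a' + 1 := by rw [← hb', List.length_take]; omega
      omega
    · simp at hb'
  · simp at hb


/-- two concat-prefixes of a nodup list with the same last element agree -/
lemma concat_prefix_eq {α : Type*} {L l₁ l₂ : List α} {a : α}
    (hnd : L.Nodup) (h₁ : l₁ ++ [a] <+: L) (h₂ : l₂ ++ [a] <+: L) :
    l₁ = l₂ := by
  have hl1 : l₁.length < L.length := by
    have := h₁.length_le; simp at this; omega
  have hl2 : l₂.length < L.length := by
    have := h₂.length_le; simp at this; omega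
  have g1 : L[l₁.length] = a := by
    rw [← h₁.getElem (by simp)]
    simp
  have g2 : L[l₂.length] = a := by
    rw [← h₂.getElem (by simp)]
    simp
  have hlen : l₁.length = l₂.length := by
    have := (hnd.getElem_inj_iff (hi := hl1) (hj := hl2)).mp (g1.trans g2.symm)
    exact this
  have e1 : l₁ ++ [a] = L.take (l₁.length + 1) := by
    have := List.prefix_iff_eq_take.mp h₁; simpa using this
  have e2 : l₂ ++ [a] = L.take (l₂.length + 1) := by
    have := List.prefix_iff_eq_take.mp h₂; simpa using this
  have : l₁ ++ [a] = l₂ ++ [a] := by rw [e1, e2, hlen]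
  exact List.append_inj_left' this (by simp)

noncomputable def emb (S : Finset (List ℕ)) (s : List ℕ) : List ℕ :=
  (pchain S s).map (fun t => Encodable.encode t)

noncomputable def unemb : List ℕ → List ℕ :=
  fun l => ((Encodable.decode (α := List ℕ) (l.getLastD 0)).getD [])

lemma emb_ne_nil {S : Finset (List ℕ)} {s : List ℕ} (hs : s ∈ S) (hne : s ≠ []) :
    emb S s ≠ [] := by
  obtain ⟨l, hl⟩ := pchain_concat hs hne
  rw [emb, hl]
  simp

lemma unemb_emb {S : Finset (List ℕ)} {s : List ℕ} (hs : s ∈ S) (hne : s ≠ []) :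
    unemb (emb S s) = s := by
  obtain ⟨l, hl⟩ := pchain_concat hs hne
  rw [emb, hl, unemb, List.map_append]
  simp [Encodable.encodek]

lemma emb_mono {S : Finset (List ℕ)} {r s : List ℕ} (h : r <+: s) :
    emb S r <+: emb S s :=
  (pchain_prefix h).map _

lemma emb_reflect {S : Finset (List ℕ)} {r s : List ℕ} (hr : r ∈ S) (hrne : r ≠ [])
    (h : emb S r <+: emb S s) : r <+: s := by
  have hch : pchain S r <+: pchain S s := by
    have h2 : emb S r = (emb S s).take (emb S r).length := List.prefix_iff_eq_take.mp h
    rw [emb, emb, ← List.map_take] at h2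
    have h3 := List.map_injective_iff.mpr (Encodable.encode_injective) h2
    rw [h3]; exact List.take_prefix _ _
  obtain ⟨l, hl⟩ := pchain_concat hr hrne
  have hmem : r ∈ pchain S s := hch.subset (by simp [hl])
  exact (mem_pchain.mp hmem).2.1

lemma emb_closed {S : Finset (List ℕ)} {s : List ℕ} (hs : s ∈ S)
    {τ : List ℕ} (hτ : τ <+: emb S s) (hne : τ ≠ []) : ∃ r ∈ S, emb S r = τ := by
  have hτt : τ = (emb S s).take τ.length := List.prefix_iff_eq_take.mp hτ
  set l' := (pchain S s).take τ.length with hl'def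
  have hτ2 : τ = l'.map (fun t => Encodable.encode t) := by
    rw [hτt, emb, ← List.map_take]
  have hl'p : l' <+: pchain S s := List.take_prefix _ _
  have hl'ne : l' ≠ [] := by
    intro h0; rw [h0] at hτ2; simp at hτ2; exact hne hτ2
  obtain ⟨L, b, hLb⟩ := (List.eq_nil_or_concat l').resolve_left hl'ne
  rw [List.concat_eq_append] at hLb
  have hbmem : b ∈ pchain S s := hl'p.subset (by simp [hLb])
  rw [mem_pchain] at hbmem
  obtain ⟨hbS, hbs, hbne⟩ := hbmem
  refine ⟨b, hbS, ?_⟩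
  obtain ⟨L2, hL2⟩ := pchain_concat hbS hbne
  have h1 : L2 ++ [b] <+: pchain S s := hL2 ▸ pchain_prefix hbs
  have h2 : L ++ [b] <+: pchain S s := hLb ▸ hl'p
  have hLL : L2 = L := concat_prefix_eq (pchain_nodup S s) h1 h2
  rw [emb, hL2, hLL, ← hLb, ← hτ2]


variable {Q : Type*}

lemma exists_realize [Preorder Q] (S : Finset (List ℕ)) (hS : ([] : List ℕ) ∉ S)
    (lab : List ℕ → Q) :
    ∃ G : QForest Q,
      (∀ s ∈ S, emb S s ∈ G.nodes) ∧
      (∀ n ∈ G.nodes, ∃ s ∈ S, emb S s = n) ∧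
      (∀ s ∈ S, G.label (emb S s) = lab s) ∧
      G.nodes.card = S.card := by
  classical
  have hne : ∀ s ∈ S, s ≠ [] := fun s hs h0 => hS (h0 ▸ hs)
  refine ⟨⟨S.image (emb S), ?_, ?_, fun l => lab (unemb l)⟩, ?_, ?_, ?_, ?_⟩
  · intro h0
    obtain ⟨s, hs, he⟩ := Finset.mem_image.mp h0
    exact emb_ne_nil hs (hne s hs) he
  · intro σ hσ τ hτp hτne
    obtain ⟨s, hs, rfl⟩ := Finset.mem_image.mp hσ
    obtain ⟨r, hr, hre⟩ := emb_closed hs hτp hτne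
    exact Finset.mem_image.mpr ⟨r, hr, hre⟩
  · intro s hs; exact Finset.mem_image_of_mem _ hs
  · intro n hn; exact Finset.mem_image.mp hn |>.imp fun s hs => hs
  · intro s hs; simp only []; rw [unemb_emb hs (hne s hs)]
  · rw [Finset.card_image_iff]
    intro a ha b hb hab
    rw [Finset.mem_coe] at ha hb
    have := unemb_emb ha (hne a ha)
    rw [hab, unemb_emb hb (hne b hb)] at this
    exact this.symm

lemma minimal_self_injOn [Preorder Q] (F : QForest Q) (hF : F.Minimal)
    (h : List ℕ → List ℕ) (hmap : ∀ σ ∈ F.nodes, h σ ∈ F.nodes)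
    (hmono : ∀ σ ∈ F.nodes, ∀ τ ∈ F.nodes, σ <+: τ → h σ <+: h τ)
    (hlab : ∀ σ ∈ F.nodes, F.label σ ≤ F.label (h σ)) :
    Set.InjOn h ↑F.nodes := by
  classical
  by_contra hni
  set S := F.nodes.image h with hSdef
  have hsub : S ⊆ F.nodes := by
    intro x hx; obtain ⟨σ, hσ, rfl⟩ := Finset.mem_image.mp hx; exact hmap _ hσ
  have hcard : S.card < F.nodes.card := by
    refine lt_of_le_of_ne Finset.card_image_le ?_
    intro he; exact hni (Finset.card_image_iff.mp he)
  have hS0 : ([] : List ℕ) ∉ S := fun h0 => F.not_root (hsub h0)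
  have hne : ∀ s ∈ S, s ≠ [] := fun s hs h0 => hS0 (h0 ▸ hs)
  obtain ⟨G, hι1, hι2, hι5, hι7⟩ := exists_realize S hS0 F.label
  have hFG : F.hle G := by
    refine ⟨fun σ => emb S (h σ), ?_, ?_, ?_⟩
    · intro σ hσ; exact hι1 _ (Finset.mem_image_of_mem h hσ)
    · intro σ hσ τ hτ hp; exact emb_mono (hmono σ hσ τ hτ hp)
    · intro σ hσ
      exact le_trans (hlab σ hσ) (le_of_eq (hι5 _ (Finset.mem_image_of_mem h hσ)).symm)
  have hGF : G.hle F := by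
    refine ⟨unemb, ?_, ?_, ?_⟩
    · intro n hn; obtain ⟨s, hs, rfl⟩ := hι2 n hn
      rw [unemb_emb hs (hne s hs)]; exact hsub hs
    · intro n hn m hm hp
      obtain ⟨s, hs, rfl⟩ := hι2 n hn; obtain ⟨t, ht, rfl⟩ := hι2 m hm
      rw [unemb_emb hs (hne s hs), unemb_emb ht (hne t ht)]
      exact emb_reflect hs (hne s hs) hp
    · intro n hn; obtain ⟨s, hs, rfl⟩ := hι2 n hn
      rw [hι5 s hs, unemb_emb hs (hne s hs)]
  have := hF G hFG hGF
  omega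

lemma reflect_prefix (s : Finset (List ℕ)) (h : List ℕ → List ℕ)
    (hmap : ∀ σ ∈ s, h σ ∈ s) (hinj : Set.InjOn h ↑s)
    (hmono : ∀ σ ∈ s, ∀ τ ∈ s, σ <+: τ → h σ <+: h τ) :
    ∀ σ ∈ s, ∀ τ ∈ s, h σ <+: h τ → σ <+: τ := by
  classical
  set P := (s ×ˢ s).filter (fun p => p.1 <+: p.2) with hP
  set Φ : List ℕ × List ℕ → List ℕ × List ℕ := fun p => (h p.1, h p.2) with hΦ
  have hmem : ∀ p, p ∈ P ↔ (p.1 ∈ s ∧ p.2 ∈ s) ∧ p.1 <+: p.2 := by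
    intro p; rw [hP, Finset.mem_filter, Finset.mem_product]
  have hmapsTo : ∀ p ∈ P, Φ p ∈ P := by
    intro p hp
    rw [hmem] at hp ⊢
    exact ⟨⟨hmap _ hp.1.1, hmap _ hp.1.2⟩, hmono _ hp.1.1 _ hp.1.2 hp.2⟩
  have hinjP : Set.InjOn Φ ↑P := by
    intro p hp q hq he
    rw [Finset.mem_coe, hmem] at hp hq
    have e1 : p.1 = q.1 := hinj hp.1.1 hq.1.1 (congrArg Prod.fst he)
    have e2 : p.2 = q.2 := hinj hp.1.2 hq.1.2 (congrArg Prod.snd he)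
    exact Prod.ext e1 e2
  have himg : P.image Φ = P := by
    apply Finset.eq_of_subset_of_card_le
    · intro x hx; obtain ⟨p, hp, rfl⟩ := Finset.mem_image.mp hx; exact hmapsTo p hp
    · rw [Finset.card_image_of_injOn hinjP]
  intro σ hσ τ hτ hp
  have hmem2 : (h σ, h τ) ∈ P := (hmem _).mpr ⟨⟨hmap _ hσ, hmap _ hτ⟩, hp⟩
  rw [← himg, Finset.mem_image] at hmem2
  obtain ⟨p, hpP, hpe⟩ := hmem2
  rw [hmem] at hpP
  have e1 : p.1 = σ := hinj hpP.1.1 hσ (congrArg Prod.fst hpe)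
  have e2 : p.2 = τ := hinj hpP.1.2 hτ (congrArg Prod.snd hpe)
  rw [← e1, ← e2]; exact hpP.2

lemma perm_label_eq [PartialOrder Q] (s : Finset (List ℕ)) (ℓ : List ℕ → Q)
    (h : List ℕ → List ℕ) (hmap : ∀ σ ∈ s, h σ ∈ s) (hinj : Set.InjOn h ↑s)
    (hlab : ∀ σ ∈ s, ℓ σ ≤ ℓ (h σ)) : ∀ σ ∈ s, ℓ (h σ) = ℓ σ := by
  classical
  set e : {x // x ∈ s} → {x // x ∈ s} := fun x => ⟨h x.1, hmap _ x.2⟩ with he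
  have hine : Function.Injective e := by
    intro a b hab
    exact Subtype.ext (hinj a.2 b.2 (congrArg Subtype.val hab))
  have hbij : Function.Bijective e := Finite.injective_iff_bijective.mp hine
  set π : Equiv.Perm {x // x ∈ s} := Equiv.ofBijective e hbij with hπ
  have hπe : ∀ x, (π x).1 = h x.1 := fun x => rfl
  have key : ∀ (k : ℕ) (x : {x // x ∈ s}), ℓ x.1 ≤ ℓ ((π ^ k) x).1 := by
    intro k
    induction k with
    | zero => intro x; simp
    | succ n ih =>
      intro x
      calc ℓ x.1 ≤ ℓ ((π ^ n) x).1 := ih x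
        _ ≤ ℓ (h ((π ^ n) x).1) := hlab _ ((π ^ n) x).2
        _ = ℓ ((π ^ (n+1)) x).1 := by
            rw [pow_succ', Equiv.Perm.mul_apply, hπe]
  intro σ hσ
  set x : {x // x ∈ s} := ⟨σ, hσ⟩ with hx
  have hn : 1 ≤ orderOf π := (orderOf_pos π)
  have h1 : ℓ (π x).1 ≤ ℓ ((π ^ (orderOf π - 1)) (π x)).1 := key _ _
  have h2 : (π ^ (orderOf π - 1)) (π x) = x := by
    rw [← Equiv.Perm.mul_apply, ← pow_succ]
    have : orderOf π - 1 + 1 = orderOf π := by omega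
    rw [this, pow_orderOf_eq_one]
    rfl
  rw [h2] at h1
  have h4 : ℓ x.1 ≤ ℓ (π x).1 := hlab σ hσ
  exact le_antisymm h1 h4


end QForestIso

/-- any two h-equivalent minimal `Q`-forests are isomorphic as labeled
forests: there is a bijection between their nodes preserving the tree (prefix) order in
both directions and preserving labels. -/
theorem minimal_hequiv_iso {Q : Type*} [PartialOrder Q] (F G : QForest Q)
    (hF : F.Minimal) (hG : G.Minimal) (h₁ : F.hle G) (h₂ : G.hle F) :
    ∃ e : List ℕ → List ℕ,
      Set.BijOn e ↑F.nodes ↑G.nodes ∧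
      (∀ σ ∈ F.nodes, ∀ τ ∈ F.nodes, (σ <+: τ ↔ e σ <+: e τ)) ∧
      (∀ σ ∈ F.nodes, G.label (e σ) = F.label σ) := by
  classical
  obtain ⟨f, hf1, hf2, hf3⟩ := h₁
  obtain ⟨g, hg1, hg2, hg3⟩ := h₂
  have hcard : F.nodes.card = G.nodes.card :=
    le_antisymm (hF G ⟨f, hf1, hf2, hf3⟩ ⟨g, hg1, hg2, hg3⟩)
      (hG F ⟨g, hg1, hg2, hg3⟩ ⟨f, hf1, hf2, hf3⟩)
  have hmap : ∀ σ ∈ F.nodes, g (f σ) ∈ F.nodes := fun σ hσ => hg1 _ (hf1 _ hσ)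
  have hmono : ∀ σ ∈ F.nodes, ∀ τ ∈ F.nodes, σ <+: τ → g (f σ) <+: g (f τ) :=
    fun σ hσ τ hτ hp => hg2 _ (hf1 _ hσ) _ (hf1 _ hτ) (hf2 _ hσ _ hτ hp)
  have hlab : ∀ σ ∈ F.nodes, F.label σ ≤ F.label (g (f σ)) :=
    fun σ hσ => le_trans (hf3 _ hσ) (hg3 _ (hf1 _ hσ))
  have hinjh : Set.InjOn (fun σ => g (f σ)) ↑F.nodes :=
    QForestIso.minimal_self_injOn F hF _ hmap hmono hlab
  have hinjf : Set.InjOn f ↑F.nodes := by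
    intro a ha b hb hab
    exact hinjh ha hb (by simp only [hab])
  have himg : F.nodes.image f = G.nodes := by
    apply Finset.eq_of_subset_of_card_le
    · intro x hx; obtain ⟨σ, hσ, rfl⟩ := Finset.mem_image.mp hx; exact hf1 _ hσ
    · rw [Finset.card_image_iff.mpr hinjf]
      exact le_of_eq hcard.symm
  have hrefl := QForestIso.reflect_prefix F.nodes (fun σ => g (f σ)) hmap hinjh hmono
  refine ⟨f, ⟨?_, hinjf, ?_⟩, ?_, ?_⟩
  · intro x hx
    exact hf1 x (Finset.mem_coe.mp hx)
  · intro y hy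
    have : y ∈ F.nodes.image f := himg ▸ Finset.mem_coe.mp hy
    obtain ⟨σ, hσ, rfl⟩ := Finset.mem_image.mp this
    exact ⟨σ, hσ, rfl⟩
  · intro σ hσ τ hτ
    constructor
    · exact hf2 σ hσ τ hτ
    · intro hp
      exact hrefl σ hσ τ hτ (hg2 _ (hf1 _ hσ) _ (hf1 _ hτ) hp)
  · intro σ hσ
    have heq := QForestIso.perm_label_eq F.nodes F.label (fun σ => g (f σ)) hmap hinjh hlab σ hσ
    exact le_antisymm (le_trans (hg3 _ (hf1 _ hσ)) (le_of_eq heq)) (hf3 _ hσ)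
end

section
/- A finite Q-forest F with at least two trees is minimal if and only if all of its component trees are minimal and pairwise incomparable under the h-preorder ≤_h. -/
/-- `C` is the component tree of the forest `F` at root `i`: the subforest of all nodes
of `F` whose first entry is `i` (with the inherited labels). -/
def QForest.IsComponent {Q : Type*} (F : QForest Q) (i : ℕ) (C : QForest Q) : Prop :=
  [i] ∈ F.nodes ∧
    (∀ σ : List ℕ, σ ∈ C.nodes ↔ (σ ∈ F.nodes ∧ ∃ σ' : List ℕ, σ = i :: σ')) ∧
    ∀ σ ∈ C.nodes, C.label σ = F.label σ

namespace QForest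
variable {Q : Type*}

lemma mem_ne_nil {F : QForest Q} {σ : List ℕ} (h : σ ∈ F.nodes) : σ ≠ [] :=
  fun h' => F.not_root (h' ▸ h)

lemma headI_of_prefix {τ σ : List ℕ} (h : τ <+: σ) (hτ : τ ≠ []) : τ.headI = σ.headI := by
  obtain ⟨r, rfl⟩ := h
  cases τ with
  | nil => exact absurd rfl hτ
  | cons a t => rfl

lemma singleton_prefix {σ : List ℕ} (h : σ ≠ []) : [σ.headI] <+: σ := by
  cases σ with
  | nil => exact absurd rfl h
  | cons a t => exact ⟨t, rfl⟩

lemma head_mem {F : QForest Q} {σ : List ℕ} (h : σ ∈ F.nodes) : [σ.headI] ∈ F.nodes :=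
  F.prefix_closed σ h _ (singleton_prefix (mem_ne_nil h)) (by simp)

/-- The standard component of `F` at root `i`. -/
def comp (F : QForest Q) (i : ℕ) : QForest Q where
  nodes := F.nodes.filter (fun σ => σ.headI = i)
  not_root := by
    intro h
    exact F.not_root (Finset.mem_filter.1 h).1
  prefix_closed := by
    intro σ hσ τ hpre hne
    simp only [Finset.mem_filter] at hσ ⊢
    exact ⟨F.prefix_closed σ hσ.1 τ hpre hne, (headI_of_prefix hpre hne).trans hσ.2⟩
  label := F.label

lemma comp_mem {F : QForest Q} {i : ℕ} {σ : List ℕ} :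
    σ ∈ (F.comp i).nodes ↔ σ ∈ F.nodes ∧ σ.headI = i := Finset.mem_filter

lemma mem_head_iff {F : QForest Q} {i : ℕ} {σ : List ℕ} (h : σ ∈ F.nodes) :
    σ.headI = i ↔ ∃ σ' : List ℕ, σ = i :: σ' := by
  cases σ with
  | nil => exact absurd rfl (mem_ne_nil h)
  | cons a t =>
    simp only [List.headI]
    constructor
    · rintro rfl; exact ⟨t, rfl⟩
    · rintro ⟨σ', h'⟩; exact (List.cons.injEq _ _ _ _ ▸ h').1

lemma comp_isComponent {F : QForest Q} {i : ℕ} (h : [i] ∈ F.nodes) :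
    F.IsComponent i (F.comp i) := by
  refine ⟨h, ?_, fun _ _ => rfl⟩
  intro σ
  rw [comp_mem]
  constructor
  · rintro ⟨h1, h2⟩
    exact ⟨h1, (mem_head_iff h1).1 h2⟩
  · rintro ⟨h1, σ', rfl⟩
    exact ⟨h1, rfl⟩

lemma isComponent_nodes_eq {F C : QForest Q} {i : ℕ} (h : F.IsComponent i C) :
    C.nodes = (F.comp i).nodes := by
  ext σ
  rw [comp_mem, h.2.1]
  constructor
  · rintro ⟨h1, σ', rfl⟩; exact ⟨h1, rfl⟩
  · rintro ⟨h1, h2⟩; exact ⟨h1, (mem_head_iff h1).1 h2⟩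

lemma isComponent_label_eq {F C : QForest Q} {i : ℕ} (h : F.IsComponent i C)
    {σ : List ℕ} (hσ : σ ∈ C.nodes) : C.label σ = (F.comp i).label σ := h.2.2 σ hσ

section congr
variable [Preorder Q]

lemma hle_congr {C C' D D' : QForest Q} (hC : C.nodes = C'.nodes)
    (hCl : ∀ σ ∈ C.nodes, C.label σ = C'.label σ)
    (hD : D.nodes = D'.nodes) (hDl : ∀ σ ∈ D.nodes, D.label σ = D'.label σ)
    (h : C.hle D) : C'.hle D' := by
  obtain ⟨f, h1, h2, h3⟩ := h
  refine ⟨f, ?_, ?_, ?_⟩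
  · intro σ hσ; rw [← hD]; exact h1 σ (hC ▸ hσ)
  · intro σ hσ τ hτ hp; exact h2 σ (hC ▸ hσ) τ (hC ▸ hτ) hp
  · intro σ hσ
    have hσ' : σ ∈ C.nodes := hC ▸ hσ
    rw [← hCl σ hσ', ← hDl _ (h1 σ hσ')]
    exact h3 σ hσ'

lemma minimal_congr_of {C C' : QForest Q} (hC : C.nodes = C'.nodes)
    (hCl : ∀ σ ∈ C.nodes, C.label σ = C'.label σ) (h : C'.Minimal) : C.Minimal := by
  intro G h1 h2
  rw [hC]
  exact h G (hle_congr hC hCl rfl (fun _ _ => rfl) h1)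
    (hle_congr rfl (fun _ _ => rfl) hC hCl h2)

end congr
end QForest

namespace QForest
variable {Q : Type*} [PartialOrder Q]

/-- If `F` is minimal then distinct components are incomparable. -/
lemma not_hle_comp {F : QForest Q} (hmin : F.Minimal) {i j : ℕ} (hne : i ≠ j)
    (hi : [i] ∈ F.nodes) : ¬ (F.comp i).hle (F.comp j) := by
  rintro ⟨f, hf1, hf2, hf3⟩
  -- G : F with component i removed
  set G : QForest Q :=
    { nodes := F.nodes.filter (fun σ => ¬ σ.headI = i)
      not_root := fun h => F.not_root (Finset.mem_filter.1 h).1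
      prefix_closed := by
        intro σ hσ τ hpre hneτ
        simp only [Finset.mem_filter] at hσ ⊢
        exact ⟨F.prefix_closed σ hσ.1 τ hpre hneτ, (headI_of_prefix hpre hneτ) ▸ hσ.2⟩
      label := F.label } with hG
  have hGF : G.hle F := ⟨id, fun σ hσ => (Finset.mem_filter.1 hσ).1,
    fun _ _ _ _ hp => hp, fun _ _ => le_refl _⟩
  have hFG : F.hle G := by
    refine ⟨fun σ => if σ.headI = i then f σ else σ, ?_, ?_, ?_⟩
    · intro σ hσ
      by_cases h : σ.headI = i
      · simp only [h, if_pos]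
        have hfσ := hf1 σ (comp_mem.2 ⟨hσ, h⟩)
        rw [comp_mem] at hfσ
        exact Finset.mem_filter.2 ⟨hfσ.1, by rw [hfσ.2]; exact hne.symm⟩
      · simp only [h, if_neg, if_false]
        exact Finset.mem_filter.2 ⟨hσ, h⟩
    · intro σ hσ τ hτ hp
      by_cases h : σ.headI = i
      · have hτi : τ.headI = i := (headI_of_prefix hp (mem_ne_nil hσ)) ▸ h
        simp only [h, hτi, if_pos]
        exact hf2 σ (comp_mem.2 ⟨hσ, h⟩) τ (comp_mem.2 ⟨hτ, hτi⟩) hp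
      · have hτi : ¬ τ.headI = i := fun h' =>
          h ((headI_of_prefix hp (mem_ne_nil hσ)).trans h')
        simp only [h, hτi, if_neg, if_false]
        exact hp
    · intro σ hσ
      by_cases h : σ.headI = i
      · simp only [h, if_pos]
        exact hf3 σ (comp_mem.2 ⟨hσ, h⟩)
      · simp only [h, if_neg, if_false]
        exact le_refl _
  have hcard := hmin G hFG hGF
  have hsub : G.nodes ⊂ F.nodes := by
    refine ⟨Finset.filter_subset _ _, fun hsub' => ?_⟩
    have := Finset.mem_filter.1 (hsub' hi)
    simp at this
  exact absurd hcard (not_le.2 (Finset.card_lt_card hsub))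

end QForest

namespace QForest
variable {Q : Type*} [PartialOrder Q]

/-- If `F` is minimal then each component is minimal. -/
lemma comp_minimal {F : QForest Q} (hmin : F.Minimal) {i : ℕ} (hi : [i] ∈ F.nodes) :
    (F.comp i).Minimal := by
  intro D hCD hDC
  by_contra hcard
  push_neg at hcard
  obtain ⟨f, hf1, hf2, hf3⟩ := hCD
  obtain ⟨g, hg1, hg2, hg3⟩ := hDC
  set N : ℕ := (F.nodes.sup List.headI) + 1 with hN
  have hNbig : ∀ σ ∈ F.nodes, σ.headI < N := by
    intro σ hσ
    exact Nat.lt_succ_of_le (Finset.le_sup hσ)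
  set θ : List ℕ → List ℕ := fun l => (l.headI + N) :: l.tail with hθ
  have hθne : ∀ l, θ l ≠ [] := fun l => by simp [hθ]
  have hθhead : ∀ l, (θ l).headI = l.headI + N := fun l => rfl
  have hθeq : ∀ l : List ℕ, l ≠ [] → ((θ l).headI - N) :: (θ l).tail = l := by
    intro l hl
    cases l with
    | nil => exact absurd rfl hl
    | cons a t => simp [hθ]
  have hθmono : ∀ l l' : List ℕ, l ≠ [] → l <+: l' → θ l <+: θ l' := by
    intro l l' hl hp
    obtain ⟨r, rfl⟩ := hp
    cases l with
    | nil => exact absurd rfl hl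
    | cons a t => exact ⟨r, by simp [hθ]⟩
  have hθrefl : ∀ l l' : List ℕ, l ≠ [] → l' ≠ [] → θ l <+: θ l' → l <+: l' := by
    intro l l' hl hl' hp
    cases l with
    | nil => exact absurd rfl hl
    | cons a t =>
      cases l' with
      | nil => exact absurd rfl hl'
      | cons b s =>
        simp only [hθ, List.headI, List.tail, List.cons_prefix_cons] at hp
        obtain ⟨h1, h2⟩ := hp
        have : a = b := by omega
        rw [this, List.cons_prefix_cons]
        exact ⟨rfl, h2⟩
  set G : QForest Q :=
    { nodes := F.nodes.filter (fun σ => ¬ σ.headI = i) ∪ D.nodes.image θ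
      not_root := by
        intro h
        rcases Finset.mem_union.1 h with h | h
        · exact F.not_root (Finset.mem_filter.1 h).1
        · obtain ⟨d, _, hd⟩ := Finset.mem_image.1 h
          exact hθne d hd
      prefix_closed := by
        intro σ hσ τ hpre hneτ
        rcases Finset.mem_union.1 hσ with h | h
        · obtain ⟨h1, h2⟩ := Finset.mem_filter.1 h
          refine Finset.mem_union_left _ (Finset.mem_filter.2
            ⟨F.prefix_closed σ h1 τ hpre hneτ, (headI_of_prefix hpre hneτ) ▸ h2⟩)
        · obtain ⟨d, hd, rfl⟩ := Finset.mem_image.1 h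
          have hdne : d ≠ [] := mem_ne_nil hd
          -- τ is a nonempty prefix of θ d
          obtain ⟨a, t, rfl⟩ : ∃ a t, d = a :: t := by
            cases d with
            | nil => exact absurd rfl hdne
            | cons a t => exact ⟨a, t, rfl⟩
          obtain ⟨r, hr⟩ := hpre
          cases τ with
          | nil => exact absurd rfl hneτ
          | cons b s =>
            simp only [hθ, List.headI, List.tail, List.cons_append, List.cons.injEq] at hr
            obtain ⟨rfl, hr2⟩ := hr
            refine Finset.mem_union_right _ (Finset.mem_image.2 ⟨a :: s, ?_, by simp [hθ]⟩)
            exact D.prefix_closed (a :: t) hd (a :: s)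
              (by rw [List.cons_prefix_cons]; exact ⟨rfl, ⟨r, hr2⟩⟩) (by simp)
      label := fun l => if N ≤ l.headI then D.label ((l.headI - N) :: l.tail) else F.label l }
    with hG
  -- G.label on the image part
  have hGlab_img : ∀ d ∈ D.nodes, G.label (θ d) = D.label d := by
    intro d hd
    have : N ≤ (θ d).headI := by rw [hθhead]; omega
    simp only [hG, this, if_pos]
    rw [hθeq d (mem_ne_nil hd)]
  have hGlab_F : ∀ σ ∈ F.nodes, G.label σ = F.label σ := by
    intro σ hσ
    have : ¬ N ≤ σ.headI := not_le.2 (hNbig σ hσ)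
    simp only [hG, this, if_neg, if_false]
  have hFG : F.hle G := by
    refine ⟨fun σ => if σ.headI = i then θ (f σ) else σ, ?_, ?_, ?_⟩
    · intro σ hσ
      by_cases h : σ.headI = i
      · simp only [h, if_pos]
        exact Finset.mem_union_right _ (Finset.mem_image.2
          ⟨f σ, hf1 σ (comp_mem.2 ⟨hσ, h⟩), rfl⟩)
      · simp only [h, if_neg, if_false]
        exact Finset.mem_union_left _ (Finset.mem_filter.2 ⟨hσ, h⟩)
    · intro σ hσ τ hτ hp
      by_cases h : σ.headI = i
      · have hτi : τ.headI = i := (headI_of_prefix hp (mem_ne_nil hσ)) ▸ h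
        simp only [h, hτi, if_pos]
        exact hθmono _ _ (mem_ne_nil (hf1 σ (comp_mem.2 ⟨hσ, h⟩)))
          (hf2 σ (comp_mem.2 ⟨hσ, h⟩) τ (comp_mem.2 ⟨hτ, hτi⟩) hp)
      · have hτi : ¬ τ.headI = i := fun h' =>
          h ((headI_of_prefix hp (mem_ne_nil hσ)).trans h')
        simp only [h, hτi, if_neg, if_false]
        exact hp
    · intro σ hσ
      by_cases h : σ.headI = i
      · simp only [h, if_pos]
        have h1 : N ≤ (θ (f σ)).headI := by rw [hθhead]; omega
        show F.label σ ≤ G.label (θ (f σ))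
        rw [hGlab_img _ (hf1 σ (comp_mem.2 ⟨hσ, h⟩))]
        exact hf3 σ (comp_mem.2 ⟨hσ, h⟩)
      · simp only [h, if_neg, if_false]
        show F.label σ ≤ G.label σ
        rw [hGlab_F σ hσ]
  -- every node of G in the image part has headI ≥ N, and these are exactly images
  have himg : ∀ σ ∈ G.nodes, N ≤ σ.headI → ∃ d ∈ D.nodes, σ = θ d := by
    intro σ hσ hNσ
    rcases Finset.mem_union.1 hσ with h | h
    · exact absurd hNσ (not_le.2 (hNbig σ (Finset.mem_filter.1 h).1))
    · obtain ⟨d, hd, rfl⟩ := Finset.mem_image.1 h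
      exact ⟨d, hd, rfl⟩
  have hGne : ∀ σ ∈ G.nodes, σ ≠ [] := fun σ hσ => mem_ne_nil (F := G) hσ
  have hGF : G.hle F := by
    refine ⟨fun l => if N ≤ l.headI then g ((l.headI - N) :: l.tail) else l, ?_, ?_, ?_⟩
    · intro σ hσ
      by_cases h : N ≤ σ.headI
      · obtain ⟨d, hd, rfl⟩ := himg σ hσ h
        simp only [h, if_pos]
        rw [hθeq d (mem_ne_nil hd)]
        exact (comp_mem.1 (hg1 d hd)).1
      · simp only [h, if_neg, if_false]
        rcases Finset.mem_union.1 hσ with h' | h'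
        · exact (Finset.mem_filter.1 h').1
        · obtain ⟨d, hd, rfl⟩ := Finset.mem_image.1 h'
          exact absurd (by rw [hθhead]; omega) h
    · intro σ hσ τ hτ hp
      by_cases h : N ≤ σ.headI
      · have hτN : N ≤ τ.headI := (headI_of_prefix hp (hGne σ hσ)) ▸ h
        obtain ⟨d, hd, rfl⟩ := himg σ hσ h
        obtain ⟨e, he, rfl⟩ := himg τ hτ hτN
        simp only [h, hτN, if_pos]
        rw [hθeq d (mem_ne_nil hd), hθeq e (mem_ne_nil he)]
        exact hg2 d hd e he (hθrefl d e (mem_ne_nil hd) (mem_ne_nil he) hp)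
      · have hτN : ¬ N ≤ τ.headI := fun h' =>
          h ((headI_of_prefix hp (hGne σ hσ)) ▸ h')
        simp only [h, hτN, if_neg, if_false]
        exact hp
    · intro σ hσ
      by_cases h : N ≤ σ.headI
      · obtain ⟨d, hd, rfl⟩ := himg σ hσ h
        simp only [h, if_pos]
        rw [hθeq d (mem_ne_nil hd)]
        rw [hGlab_img d hd]; exact hg3 d hd
      · simp only [h, if_neg, if_false]
        rcases Finset.mem_union.1 hσ with h' | h'
        · exact (hGlab_F σ (Finset.mem_filter.1 h').1).le
        · obtain ⟨d, hd, rfl⟩ := Finset.mem_image.1 h'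
          exact absurd (by rw [hθhead]; omega) h
  -- cardinality
  have hsplit : (F.nodes.filter (fun σ => σ.headI = i)).card
      + (F.nodes.filter (fun σ => ¬ σ.headI = i)).card = F.nodes.card :=
    Finset.card_filter_add_card_filter_not _
  have hcardG : G.nodes.card ≤ (F.nodes.filter (fun σ => ¬ σ.headI = i)).card + D.nodes.card :=
    le_trans (Finset.card_union_le _ _) (Nat.add_le_add_left Finset.card_image_le _)
  have hcompcard : (F.comp i).nodes.card = (F.nodes.filter (fun σ => σ.headI = i)).card := rfl
  have := hmin G hFG hGF
  omega

end QForest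

namespace QForest
variable {Q : Type*}

/-- The subtree of `G` above the node `b`, re-rooted as a tree with root `[0]`. -/
def reroot (G : QForest Q) (b : List ℕ) (hb : b ≠ []) : QForest Q where
  nodes := (G.nodes.filter (fun τ => b <+: τ)).image (fun τ => 0 :: τ.drop b.length)
  not_root := by
    intro h
    obtain ⟨τ, _, hτ⟩ := Finset.mem_image.1 h
    exact List.cons_ne_nil _ _ hτ
  prefix_closed := by
    intro σ hσ τ hpre hneτ
    obtain ⟨ρ, hρ, rfl⟩ := Finset.mem_image.1 hσ
    obtain ⟨hρG, hbρ⟩ := Finset.mem_filter.1 hρ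
    have hbeq : b ++ ρ.drop b.length = ρ := by
      obtain ⟨r, rfl⟩ := hbρ; rw [List.drop_left]
    obtain ⟨r, hr⟩ := hpre
    cases τ with
    | nil => exact absurd rfl hneτ
    | cons a t =>
      simp only [List.cons_append, List.cons.injEq] at hr
      obtain ⟨rfl, hr2⟩ := hr
      have htρ : b ++ t ∈ G.nodes := by
        refine G.prefix_closed ρ hρG (b ++ t) ?_ (by simp [hb])
        conv_rhs => rw [← hbeq]
        exact (List.prefix_append_right_inj b).2 ⟨r, hr2⟩
      refine Finset.mem_image.2 ⟨b ++ t, Finset.mem_filter.2 ⟨htρ, List.prefix_append _ _⟩, ?_⟩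
      rw [List.drop_left]
  label := fun σ => G.label (b ++ σ.tail)

lemma mem_reroot {G : QForest Q} {b : List ℕ} {hb : b ≠ []} {σ : List ℕ} :
    σ ∈ (G.reroot b hb).nodes ↔ ∃ l, σ = 0 :: l ∧ b ++ l ∈ G.nodes := by
  constructor
  · intro h
    obtain ⟨ρ, hρ, rfl⟩ := Finset.mem_image.1 h
    obtain ⟨hρG, hbρ⟩ := Finset.mem_filter.1 hρ
    refine ⟨ρ.drop b.length, rfl, ?_⟩
    obtain ⟨r, rfl⟩ := hbρ
    rw [List.drop_left]
    exact hρG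
  · rintro ⟨l, rfl, hl⟩
    refine Finset.mem_image.2 ⟨b ++ l, Finset.mem_filter.2 ⟨hl, List.prefix_append _ _⟩, ?_⟩
    rw [List.drop_left]

lemma reroot_card {G : QForest Q} {b : List ℕ} {hb : b ≠ []} :
    (G.reroot b hb).nodes.card = (G.nodes.filter (fun τ => b <+: τ)).card := by
  apply Finset.card_image_of_injOn
  intro τ hτ τ' hτ' heq
  obtain ⟨-, hbτ⟩ := Finset.mem_filter.1 hτ
  obtain ⟨-, hbτ'⟩ := Finset.mem_filter.1 hτ'
  have h1 : b ++ τ.drop b.length = τ := by obtain ⟨r, rfl⟩ := hbτ; rw [List.drop_left]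
  have h2 : b ++ τ'.drop b.length = τ' := by obtain ⟨r, rfl⟩ := hbτ'; rw [List.drop_left]
  rw [← h1, ← h2]
  simp only [List.cons.injEq, true_and] at heq
  rw [heq]

variable [PartialOrder Q]

lemma minimal_of_components {F : QForest Q}
    (hmin : ∀ (i : ℕ) (C : QForest Q), F.IsComponent i C → C.Minimal)
    (hinc : ∀ (i j : ℕ) (Ci Cj : QForest Q), i ≠ j → F.IsComponent i Ci →
      F.IsComponent j Cj → ¬ Ci.hle Cj ∧ ¬ Cj.hle Ci) : F.Minimal := by
  rintro G ⟨f, hf1, hf2, hf3⟩ ⟨g, hg1, hg2, hg3⟩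
  -- Step 1: g ∘ f fixes the root indices
  have key1 : ∀ i : ℕ, [i] ∈ F.nodes → (g (f [i])).headI = i := by
    intro i hi
    by_contra hne
    set j := (g (f [i])).headI with hj
    have hgfi : g (f [i]) ∈ F.nodes := hg1 _ (hf1 _ hi)
    have hjF : [j] ∈ F.nodes := head_mem hgfi
    refine (hinc i j (F.comp i) (F.comp j) (fun h => hne h.symm) (comp_isComponent hi)
      (comp_isComponent hjF)).1 ?_
    refine ⟨fun σ => g (f σ), ?_, ?_, ?_⟩
    · intro σ hσ
      obtain ⟨hσF, hσi⟩ := comp_mem.1 hσ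
      have hpre : [i] <+: σ := hσi ▸ singleton_prefix (mem_ne_nil hσF)
      have h1 : g (f [i]) <+: g (f σ) :=
        hg2 _ (hf1 _ hi) _ (hf1 _ hσF) (hf2 _ hi _ hσF hpre)
      refine comp_mem.2 ⟨hg1 _ (hf1 _ hσF), ?_⟩
      rw [← headI_of_prefix h1 (mem_ne_nil hgfi)]
    · intro σ hσ τ hτ hp
      exact hg2 _ (hf1 _ (comp_mem.1 hσ).1) _ (hf1 _ (comp_mem.1 hτ).1)
        (hf2 _ (comp_mem.1 hσ).1 _ (comp_mem.1 hτ).1 hp)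
    · intro σ hσ
      have hσF := (comp_mem.1 hσ).1
      exact le_trans (hf3 _ hσF) (hg3 _ (hf1 _ hσF))
  -- Step 2: images of distinct roots are prefix-incomparable
  have key2 : ∀ i j : ℕ, [i] ∈ F.nodes → [j] ∈ F.nodes → i ≠ j → ¬ (f [i] <+: f [j]) := by
    intro i j hi hj hne hp
    have h1 : g (f [i]) <+: g (f [j]) := hg2 _ (hf1 _ hi) _ (hf1 _ hj) hp
    have := headI_of_prefix h1 (mem_ne_nil (hg1 _ (hf1 _ hi)))
    rw [key1 i hi, key1 j hj] at this
    exact hne this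
  -- Step 3: each component of F injects (cardinality-wise) into the subtree above f [i]
  have key3 : ∀ i : ℕ, [i] ∈ F.nodes →
      (F.comp i).nodes.card ≤ (G.nodes.filter (fun τ => f [i] <+: τ)).card := by
    intro i hi
    set b := f [i] with hbdef
    have hbG : b ∈ G.nodes := hf1 _ hi
    have hb : b ≠ [] := mem_ne_nil hbG
    rw [← reroot_card (G := G) (hb := hb)]
    have hpre_comp : ∀ σ ∈ (F.comp i).nodes, b <+: f σ := by
      intro σ hσ
      obtain ⟨hσF, hσi⟩ := comp_mem.1 hσ
      exact hf2 _ hi _ hσF (hσi ▸ singleton_prefix (mem_ne_nil hσF))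
    have hCR : (F.comp i).hle (G.reroot b hb) := by
      refine ⟨fun σ => 0 :: (f σ).drop b.length, ?_, ?_, ?_⟩
      · intro σ hσ
        refine mem_reroot.2 ⟨(f σ).drop b.length, rfl, ?_⟩
        obtain ⟨r, hr⟩ := hpre_comp σ hσ
        rw [← hr, List.drop_left]
        rw [hr]
        exact hf1 _ (comp_mem.1 hσ).1
      · intro σ hσ τ hτ hp
        rw [List.cons_prefix_cons]
        refine ⟨rfl, ?_⟩
        obtain ⟨r, hr⟩ := hpre_comp σ hσ
        have hfp : f σ <+: f τ := hf2 _ (comp_mem.1 hσ).1 _ (comp_mem.1 hτ).1 hp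
        obtain ⟨r2, hr2⟩ := hfp
        rw [← hr2, ← hr]
        simp only [List.append_assoc, List.drop_left]
        exact ⟨r2, rfl⟩
      · intro σ hσ
        show F.label σ ≤ G.label (b ++ ((f σ).drop b.length))
        obtain ⟨r, hr⟩ := hpre_comp σ hσ
        rw [← hr, List.drop_left, hr]
        exact hf3 _ (comp_mem.1 hσ).1
    have hRC : (G.reroot b hb).hle (F.comp i) := by
      refine ⟨fun σ => g (b ++ σ.tail), ?_, ?_, ?_⟩
      · intro σ hσ
        obtain ⟨l, rfl, hl⟩ := mem_reroot.1 hσ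
        simp only [List.tail_cons]
        refine comp_mem.2 ⟨hg1 _ hl, ?_⟩
        have h1 : g b <+: g (b ++ l) := hg2 _ hbG _ hl (List.prefix_append _ _)
        rw [← headI_of_prefix h1 (mem_ne_nil (hg1 _ hbG))]
        exact key1 i hi
      · intro σ hσ τ hτ hp
        obtain ⟨l, rfl, hl⟩ := mem_reroot.1 hσ
        obtain ⟨l', rfl, hl'⟩ := mem_reroot.1 hτ
        simp only [List.tail_cons]
        rw [List.cons_prefix_cons] at hp
        exact hg2 _ hl _ hl' ((List.prefix_append_right_inj b).2 hp.2)
      · intro σ hσ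
        obtain ⟨l, rfl, hl⟩ := mem_reroot.1 hσ
        simp only [List.tail_cons]
        exact hg3 _ hl
    exact hmin i (F.comp i) (comp_isComponent hi) _ hCR hRC
  -- Step 4: sum over roots
  set I : Finset ℕ := F.nodes.image List.headI with hI
  have hIroot : ∀ i ∈ I, [i] ∈ F.nodes := by
    intro i hiI
    obtain ⟨σ, hσ, rfl⟩ := Finset.mem_image.1 hiI
    exact head_mem hσ
  have hcardF : F.nodes.card = ∑ i ∈ I, (F.nodes.filter (fun σ => σ.headI = i)).card := by
    apply Finset.card_eq_sum_card_fiberwise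
    intro σ hσ
    exact Finset.mem_image.2 ⟨σ, hσ, rfl⟩
  have hdisj : ∀ i ∈ I, ∀ j ∈ I, i ≠ j →
      Disjoint (G.nodes.filter (fun τ => f [i] <+: τ)) (G.nodes.filter (fun τ => f [j] <+: τ)) := by
    intro i hiI j hjI hne
    rw [Finset.disjoint_left]
    intro τ hτi hτj
    have h1 := (Finset.mem_filter.1 hτi).2
    have h2 := (Finset.mem_filter.1 hτj).2
    rcases List.prefix_or_prefix_of_prefix h1 h2 with h | h
    · exact key2 i j (hIroot i hiI) (hIroot j hjI) hne h
    · exact key2 j i (hIroot j hjI) (hIroot i hiI) hne.symm h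
  have hsum : ∑ i ∈ I, (G.nodes.filter (fun τ => f [i] <+: τ)).card ≤ G.nodes.card := by
    rw [← Finset.card_biUnion hdisj]
    apply Finset.card_le_card
    intro τ hτ
    obtain ⟨i, _, hτ⟩ := Finset.mem_biUnion.1 hτ
    exact (Finset.mem_filter.1 hτ).1
  calc F.nodes.card = ∑ i ∈ I, (F.nodes.filter (fun σ => σ.headI = i)).card := hcardF
    _ ≤ ∑ i ∈ I, (G.nodes.filter (fun τ => f [i] <+: τ)).card :=
        Finset.sum_le_sum (fun i hiI => key3 i (hIroot i hiI))
    _ ≤ G.nodes.card := hsum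

end QForest

/-- a finite `Q`-forest with at least two trees is minimal iff all of its
component trees are minimal and pairwise incomparable under the h-preorder. -/
theorem minimal_iff_components {Q : Type*} [PartialOrder Q] (F : QForest Q)
    (htwo : ∃ i j : ℕ, i ≠ j ∧ [i] ∈ F.nodes ∧ [j] ∈ F.nodes) :
    F.Minimal ↔
      ((∀ (i : ℕ) (C : QForest Q), F.IsComponent i C → C.Minimal) ∧
        ∀ (i j : ℕ) (Ci Cj : QForest Q), i ≠ j → F.IsComponent i Ci →
          F.IsComponent j Cj → ¬ Ci.hle Cj ∧ ¬ Cj.hle Ci) := by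
  constructor
  · intro hmin
    constructor
    · intro i C hC
      exact QForest.minimal_congr_of (QForest.isComponent_nodes_eq hC)
        (fun σ hσ => QForest.isComponent_label_eq hC hσ)
        (QForest.comp_minimal hmin hC.1)
    · intro i j Ci Cj hne hCi hCj
      constructor
      · intro h
        exact QForest.not_hle_comp hmin hne hCi.1
          (QForest.hle_congr (QForest.isComponent_nodes_eq hCi)
            (fun σ hσ => QForest.isComponent_label_eq hCi hσ)
            (QForest.isComponent_nodes_eq hCj)
            (fun σ hσ => QForest.isComponent_label_eq hCj hσ) h)
      · intro h
        exact QForest.not_hle_comp hmin hne.symm hCj.1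
          (QForest.hle_congr (QForest.isComponent_nodes_eq hCj)
            (fun σ hσ => QForest.isComponent_label_eq hCj hσ)
            (QForest.isComponent_nodes_eq hCi)
            (fun σ hσ => QForest.isComponent_label_eq hCi hσ) h)
  · rintro ⟨h1, h2⟩
    exact QForest.minimal_of_components h1 h2
end

section
/- Every h-precomplete numbering ν : ℕ → S is join-irreducible in the semilattice of numberings of S (with bottom adjoined) under join ⊕ and h-relativized reducibility ≤^h: if ν ≤^h μ₁ ⊕ μ₂ then ν ≤^h μ₁ or ν ≤^h μ₂. -/
/-- Relativized partial recursiveness: `f` is partial recursive in the (total) oracle `O`. -/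
inductive RecursiveInOracle (O : ℕ → ℕ) : (ℕ →. ℕ) → Prop
  | oracle : RecursiveInOracle O O
  | zero : RecursiveInOracle O (pure 0)
  | succ : RecursiveInOracle O Nat.succ
  | left : RecursiveInOracle O ↑fun n : ℕ => n.unpair.1
  | right : RecursiveInOracle O ↑fun n : ℕ => n.unpair.2
  | pair {f g} : RecursiveInOracle O f → RecursiveInOracle O g →
      RecursiveInOracle O fun n => Nat.pair <$> f n <*> g n
  | comp {f g} : RecursiveInOracle O f → RecursiveInOracle O g → RecursiveInOracle O fun n => g n >>= f
  | prec {f g} : RecursiveInOracle O f → RecursiveInOracle O g → RecursiveInOracle O (Nat.unpaired fun a n =>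
      n.rec (f a) fun y IH => do let i ← IH; g (Nat.pair a (Nat.pair y i)))
  | rfind {f} : RecursiveInOracle O f →
      RecursiveInOracle O fun a => Nat.rfind fun n => (fun m => m = 0) <$> f (Nat.pair a n)

/-- Computable (many-one style) reducibility between numberings. -/
def NumRed {S : Type*} (μ ν : ℕ → S) : Prop :=
  ∃ f : ℕ → ℕ, Computable f ∧ ∀ n, μ n = ν (f n)

/-- Reducibility between numberings via an `O`-computable total function. -/
def NumRedIn {S : Type*} (O : ℕ → ℕ) (μ ν : ℕ → S) : Prop :=
  ∃ f : ℕ → ℕ, RecursiveInOracle O ↑f ∧ ∀ n, μ n = ν (f n)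

/-- The join `μ ⊕ ν` of two numberings. -/
def NumJoin {S : Type*} (μ ν : ℕ → S) : ℕ → S :=
  fun n => if n % 2 = 0 then μ (n / 2) else ν (n / 2)

/-- `ν` is `O`-precomplete: every `O`-partial computable function has a total
computable `ν`-totalizer. -/
def Precomplete {S : Type*} (O : ℕ → ℕ) (ν : ℕ → S) : Prop :=
  ∀ ψ : ℕ →. ℕ, RecursiveInOracle O ψ →
    ∃ t : ℕ → ℕ, Computable t ∧ ∀ (x : ℕ) (hx : (ψ x).Dom), ν (t x) = ν ((ψ x).get hx)

/-- `ν` is `O`-complete with respect to `a`. -/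
def CompleteAt {S : Type*} (O : ℕ → ℕ) (ν : ℕ → S) (a : S) : Prop :=
  ∀ ψ : ℕ →. ℕ, RecursiveInOracle O ψ →
    ∃ t : ℕ → ℕ, Computable t ∧ (∀ (x : ℕ) (hx : (ψ x).Dom), ν (t x) = ν ((ψ x).get hx)) ∧
      ∀ x : ℕ, ¬ (ψ x).Dom → ν (t x) = a

open Classical in
/-- The jump (halting problem) of a partial function `U`, as a 0-1 valued total function. -/
noncomputable def jumpOf (U : ℕ →. ℕ) : ℕ → ℕ :=
  fun x => if (U x).Dom then 1 else 0

open Classical in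
/-- The operation `G(μ,ν,h)` defined from a universal `h`-partial computable function `U`:
`G⟨n,x⟩ = ν n` if `U x` diverges and `μ (U x)` if it converges. -/
noncomputable def GOp {S : Type*} (μ ν : ℕ → S) (U : ℕ →. ℕ) : ℕ → S :=
  fun m =>
    if hd : (U (Nat.unpair m).2).Dom then μ ((U (Nat.unpair m).2).get hd)
    else ν (Nat.unpair m).1

namespace PJI

theorem recIn_of_partrec {O : ℕ → ℕ} {f : ℕ →. ℕ} (hf : Nat.Partrec f) : RecursiveInOracle O f := by
  induction hf with
  | zero => exact .zero
  | succ => exact .succ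
  | left => exact .left
  | right => exact .right
  | pair _ _ ihf ihg => exact .pair ihf ihg
  | comp _ _ ihf ihg => exact .comp ihf ihg
  | prec _ _ ihf ihg => exact .prec ihf ihg
  | rfind _ ih => exact .rfind ih

theorem recIn_of_computable {O : ℕ → ℕ} {f : ℕ → ℕ} (hf : Computable f) : RecursiveInOracle O ↑f :=
  recIn_of_partrec (Partrec.nat_iff.mp hf.partrec)

open Nat.Partrec (Code)
open Nat.Partrec.Code

def WEfun : ℕ →. ℕ := fun m => eval (Denumerable.ofNat Code m.unpair.1) m

theorem WEfun_partrec : Nat.Partrec WEfun := by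
  rw [← Partrec.nat_iff]
  exact eval_part.comp ((Computable.ofNat _).comp (Computable.fst.comp Primrec.unpair.to_comp))
    Computable.id

/-- `sigHat f ⟨c,z⟩` = `f (eval c ⟨c,z⟩) % 2`. -/
def sigHat (f : ℕ → ℕ) : ℕ →. ℕ := fun m => (WEfun m >>= (↑f : ℕ →. ℕ)) >>= (↑(fun v : ℕ => v % 2) : ℕ →. ℕ)

theorem sigHat_recIn {O : ℕ → ℕ} {f : ℕ → ℕ} (hf : RecursiveInOracle O ↑f) :
    RecursiveInOracle O (sigHat f) :=
  RecursiveInOracle.comp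
    (recIn_of_computable (((Primrec.nat_mod.comp Primrec.id (Primrec.const 2)).of_eq (fun _ => rfl)).to_comp))
    (RecursiveInOracle.comp hf (recIn_of_partrec WEfun_partrec))

def gStep (f : ℕ → ℕ) : ℕ →. ℕ := fun q =>
  (Nat.pair <$> (↑(fun n : ℕ => n) : ℕ →. ℕ) q <*>
      ((↑(fun q : ℕ => Nat.pair q.unpair.1 q.unpair.2.unpair.1) : ℕ →. ℕ) q >>= sigHat f)) >>=
    (↑(fun q : ℕ => q.unpair.1.unpair.2.unpair.2 + (1 - q.unpair.2)) : ℕ →. ℕ)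

theorem gStep_recIn {O : ℕ → ℕ} {f : ℕ → ℕ} (hf : RecursiveInOracle O ↑f) :
    RecursiveInOracle O (gStep f) := by
  have h1 : Computable fun q : ℕ => Nat.pair q.unpair.1 q.unpair.2.unpair.1 :=
    (Primrec₂.natPair.comp (Primrec.fst.comp Primrec.unpair)
      (Primrec.fst.comp (Primrec.unpair.comp (Primrec.snd.comp Primrec.unpair)))).to_comp
  have h2 : Computable fun q : ℕ => q.unpair.1.unpair.2.unpair.2 + (1 - q.unpair.2) :=
    (Primrec.nat_add.comp
      (Primrec.snd.comp (Primrec.unpair.comp (Primrec.snd.comp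
        (Primrec.unpair.comp (Primrec.fst.comp Primrec.unpair)))))
      (Primrec.nat_sub.comp (Primrec.const 1) (Primrec.snd.comp Primrec.unpair))).to_comp
  exact RecursiveInOracle.comp (recIn_of_computable h2)
    (RecursiveInOracle.pair (recIn_of_computable Computable.id)
      (RecursiveInOracle.comp (sigHat_recIn hf) (recIn_of_computable h1)))

def NFun (f : ℕ → ℕ) : ℕ →. ℕ :=
  Nat.unpaired fun a n =>
    n.rec ((pure 0 : ℕ →. ℕ) a) fun y IH => do let i ← IH; (gStep f) (Nat.pair a (Nat.pair y i))

theorem NFun_recIn {O : ℕ → ℕ} {f : ℕ → ℕ} (hf : RecursiveInOracle O ↑f) :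
    RecursiveInOracle O (NFun f) :=
  RecursiveInOracle.prec RecursiveInOracle.zero (gStep_recIn hf)

def delFun (f : ℕ → ℕ) : ℕ →. ℕ := fun m =>
  (Nat.pair <$> (↑(fun n : ℕ => n) : ℕ →. ℕ) m <*> (Nat.pair <$> NFun f m <*> sigHat f m)) >>=
    (↑(fun q : ℕ =>
      if q.unpair.2.unpair.2 = 0 then q.unpair.2.unpair.1
      else q.unpair.1.unpair.2 - q.unpair.2.unpair.1) : ℕ →. ℕ)

theorem delFun_recIn {O : ℕ → ℕ} {f : ℕ → ℕ} (hf : RecursiveInOracle O ↑f) :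
    RecursiveInOracle O (delFun f) := by
  have h2 : Computable fun q : ℕ =>
      if q.unpair.2.unpair.2 = 0 then q.unpair.2.unpair.1
      else q.unpair.1.unpair.2 - q.unpair.2.unpair.1 := by
    have pa : Primrec fun q : ℕ => q.unpair.2.unpair.2 :=
      Primrec.snd.comp (Primrec.unpair.comp (Primrec.snd.comp Primrec.unpair))
    have pb : Primrec fun q : ℕ => q.unpair.2.unpair.1 :=
      Primrec.fst.comp (Primrec.unpair.comp (Primrec.snd.comp Primrec.unpair))
    have pc : Primrec fun q : ℕ => q.unpair.1.unpair.2 :=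
      Primrec.snd.comp (Primrec.unpair.comp (Primrec.fst.comp Primrec.unpair))
    exact (Primrec.ite (Primrec.eq.comp pa (Primrec.const 0)) pb
      (Primrec.nat_sub.comp pc pb)).to_comp
  exact RecursiveInOracle.comp (recIn_of_computable h2)
    (RecursiveInOracle.pair (recIn_of_computable Computable.id)
      (RecursiveInOracle.pair (NFun_recIn hf) (sigHat_recIn hf)))

/-! ### value computations -/

def sVal (f t : ℕ → ℕ) (k : ℕ) : ℕ → ℕ := fun z => f (t (Nat.pair k z)) % 2

def cnt0 (f t : ℕ → ℕ) (k : ℕ) : ℕ → ℕ := fun z => Nat.count (fun y => sVal f t k y = 0) z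

theorem bind_pfun {α β : Type} (x : Part α) (g : α →. β) :
    (x >>= (g : α → Part β)) = x.bind g := rfl

theorem some_bind_pfun {α β : Type} (a : α) (g : α →. β) :
    (Part.some a).bind (g : α → Part β) = g a := Part.bind_some a g

section Values

variable {f t : ℕ → ℕ} {k : ℕ}

theorem sigHat_val (hW : ∀ z : ℕ, WEfun (Nat.pair k z) = Part.some (t (Nat.pair k z)))
    (z : ℕ) : sigHat f (Nat.pair k z) = Part.some (sVal f t k z) := by
  simp [sigHat, hW z, PFun.coe_val, Part.bind_some, sVal, Part.bind_eq_bind, bind_pfun, some_bind_pfun]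

theorem gStep_val (a y i : ℕ) (v : ℕ) (hv : sigHat f (Nat.pair a y) = Part.some v) :
    gStep f (Nat.pair a (Nat.pair y i)) = Part.some (i + (1 - v)) := by
  simp [gStep, PFun.coe_val, Part.bind_some, Nat.unpair_pair, hv, Seq.seq, Part.map_some,
    Part.bind_eq_bind, bind_pfun, some_bind_pfun]

theorem NFun_val (hW : ∀ z : ℕ, WEfun (Nat.pair k z) = Part.some (t (Nat.pair k z)))
    (z : ℕ) : NFun f (Nat.pair k z) = Part.some (cnt0 f t k z) := by
  induction z with
  | zero =>
    have : NFun f (Nat.pair k 0) = Part.some 0 := by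
      simp only [NFun, Nat.unpaired, Nat.unpair_pair]
      rfl
    simp [this, cnt0, Nat.count_zero]
  | succ n ih =>
    have hstep : NFun f (Nat.pair k (n + 1)) =
        NFun f (Nat.pair k n) >>= fun i => gStep f (Nat.pair k (Nat.pair n i)) := by
      simp only [NFun, Nat.unpaired, Nat.unpair_pair]
    rw [hstep, ih]
    simp only [Part.bind_eq_bind, Part.bind_some]
    rw [gStep_val k n (cnt0 f t k n) (sVal f t k n) (sigHat_val hW n)]
    congr 1
    have hsucc : cnt0 f t k (n + 1) = cnt0 f t k n + if sVal f t k n = 0 then 1 else 0 := by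
      simp [cnt0, Nat.count_succ]
    rw [hsucc]
    rcases Nat.mod_two_eq_zero_or_one (f (t (Nat.pair k n))) with hpar | hpar <;>
      simp [sVal, hpar]

theorem delFun_val (hW : ∀ z : ℕ, WEfun (Nat.pair k z) = Part.some (t (Nat.pair k z)))
    (z : ℕ) :
    delFun f (Nat.pair k z) =
      Part.some (if sVal f t k z = 0 then cnt0 f t k z else z - cnt0 f t k z) := by
  simp [delFun, NFun_val hW z, sigHat_val hW z, PFun.coe_val, Part.bind_some, Seq.seq,
    Part.map_some, Nat.unpair_pair, Part.bind_eq_bind, bind_pfun, some_bind_pfun]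

end Values

theorem count_one_eq {s : ℕ → ℕ} (hs01 : ∀ z, s z = 0 ∨ s z = 1) (z : ℕ) :
    Nat.count (fun y => s y = 1) z = z - Nat.count (fun y => s y = 0) z := by
  induction z with
  | zero => simp
  | succ n ih =>
    have hle : Nat.count (fun y => s y = 0) n ≤ n := Nat.count_le _
    rw [Nat.count_succ, Nat.count_succ, ih]
    rcases hs01 n with hpar | hpar
    · simp [hpar, Nat.succ_sub_succ]
    · simp [hpar, Nat.succ_sub hle]

/-! ### the search function -/

def QFun (f : ℕ → ℕ) (k s₀ : ℕ) : ℕ →. ℕ := fun m =>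
  (Nat.pair <$> (↑(fun n : ℕ => n) : ℕ →. ℕ) m <*>
      (Nat.pair <$> ((↑(fun n : ℕ => Nat.pair k n.unpair.2) : ℕ →. ℕ) m >>= NFun f) <*>
        ((↑(fun n : ℕ => Nat.pair k n.unpair.2) : ℕ →. ℕ) m >>= sigHat f))) >>=
    PFun.lift (fun q : ℕ =>
      if q.unpair.2.unpair.2 = s₀ ∧
          (if s₀ = 0 then q.unpair.2.unpair.1 else q.unpair.1.unpair.2 - q.unpair.2.unpair.1) =
            q.unpair.1.unpair.1
        then 0 else 1)

theorem QFun_recIn {O : ℕ → ℕ} {f : ℕ → ℕ} (hf : RecursiveInOracle O ↑f) (k s₀ : ℕ) :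
    RecursiveInOracle O (QFun f k s₀) := by
  have hre : Computable fun n : ℕ => Nat.pair k n.unpair.2 :=
    (Primrec₂.natPair.comp (Primrec.const k) (Primrec.snd.comp Primrec.unpair)).to_comp
  have hpost : Computable fun q : ℕ =>
      if q.unpair.2.unpair.2 = s₀ ∧
          (if s₀ = 0 then q.unpair.2.unpair.1 else q.unpair.1.unpair.2 - q.unpair.2.unpair.1) =
            q.unpair.1.unpair.1
        then 0 else 1 := by
    have pa : Primrec fun q : ℕ => q.unpair.2.unpair.2 :=
      Primrec.snd.comp (Primrec.unpair.comp (Primrec.snd.comp Primrec.unpair))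
    have pb : Primrec fun q : ℕ => q.unpair.2.unpair.1 :=
      Primrec.fst.comp (Primrec.unpair.comp (Primrec.snd.comp Primrec.unpair))
    have pc : Primrec fun q : ℕ => q.unpair.1.unpair.2 :=
      Primrec.snd.comp (Primrec.unpair.comp (Primrec.fst.comp Primrec.unpair))
    have pd : Primrec fun q : ℕ => q.unpair.1.unpair.1 :=
      Primrec.fst.comp (Primrec.unpair.comp (Primrec.fst.comp Primrec.unpair))
    have pifs : Primrec fun q : ℕ =>
        if s₀ = 0 then q.unpair.2.unpair.1 else q.unpair.1.unpair.2 - q.unpair.2.unpair.1 := by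
      by_cases hs : s₀ = 0 <;> simp only [hs, if_true, if_false, reduceIte] <;>
        first
          | exact pb
          | exact Primrec.nat_sub.comp pc pb
    exact (Primrec.ite
      ((Primrec.eq.comp pa (Primrec.const s₀)).and (Primrec.eq.comp pifs pd))
      (Primrec.const 0) (Primrec.const 1)).to_comp
  exact RecursiveInOracle.comp (recIn_of_computable hpost)
    (RecursiveInOracle.pair (recIn_of_computable Computable.id)
      (RecursiveInOracle.pair (RecursiveInOracle.comp (NFun_recIn hf) (recIn_of_computable hre))
        (RecursiveInOracle.comp (sigHat_recIn hf) (recIn_of_computable hre))))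

theorem QFun_val {f t : ℕ → ℕ} {k : ℕ}
    (hW : ∀ z : ℕ, WEfun (Nat.pair k z) = Part.some (t (Nat.pair k z))) (s₀ x z : ℕ) :
    QFun f k s₀ (Nat.pair x z) =
      Part.some (if sVal f t k z = s₀ ∧
          (if s₀ = 0 then cnt0 f t k z else z - cnt0 f t k z) = x then 0 else 1) := by
  simp [QFun, NFun_val hW z, sigHat_val hW z, PFun.coe_val, Part.bind_some, Seq.seq,
    Part.map_some, Nat.unpair_pair, Part.bind_eq_bind, bind_pfun, some_bind_pfun]

def RFun (f : ℕ → ℕ) (k s₀ : ℕ) : ℕ →. ℕ := fun a =>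
  Nat.rfind fun n => (fun m => m = 0) <$> QFun f k s₀ (Nat.pair a n)

theorem RFun_recIn {O : ℕ → ℕ} {f : ℕ → ℕ} (hf : RecursiveInOracle O ↑f) (k s₀ : ℕ) :
    RecursiveInOracle O (RFun f k s₀) :=
  RecursiveInOracle.rfind (QFun_recIn hf k s₀)

def GFun (f t : ℕ → ℕ) (k s₀ : ℕ) : ℕ →. ℕ := fun x =>
  RFun f k s₀ x >>= fun z =>
    (((↑(fun z : ℕ => t (Nat.pair k z)) : ℕ →. ℕ) z) >>= (↑f : ℕ →. ℕ)) >>=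
      (↑(fun v : ℕ => v / 2) : ℕ →. ℕ)

theorem GFun_recIn {O : ℕ → ℕ} {f t : ℕ → ℕ} (hf : RecursiveInOracle O ↑f) (ht : Computable t)
    (k s₀ : ℕ) : RecursiveInOracle O (GFun f t k s₀) := by
  have h1 : Computable fun z : ℕ => t (Nat.pair k z) :=
    ht.comp (Primrec₂.natPair.comp (Primrec.const k) Primrec.id).to_comp
  have h2 : Primrec fun v : ℕ => v / 2 :=
    (Primrec.nat_div.comp Primrec.id (Primrec.const 2)).of_eq fun _ => rfl
  exact RecursiveInOracle.comp
    (RecursiveInOracle.comp (recIn_of_computable h2.to_comp)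
      (RecursiveInOracle.comp hf (recIn_of_computable h1)))
    (RFun_recIn hf k s₀)


end PJI

/-- every `h`-precomplete numbering is join-irreducible w.r.t. `≤^h`. -/
theorem precomplete_joinIrreducible {S : Type*} (h : ℕ → ℕ) (ν μ₁ μ₂ : ℕ → S)
    (hpre : Precomplete h ν) (hred : NumRedIn h ν (NumJoin μ₁ μ₂)) :
    NumRedIn h ν μ₁ ∨ NumRedIn h ν μ₂ := by
  obtain ⟨f, hfrec, hfred⟩ := hred
  obtain ⟨t, htc, hts⟩ := hpre (PJI.delFun f) (PJI.delFun_recIn hfrec)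
  obtain ⟨c, hc⟩ := Nat.Partrec.Code.exists_code.mp (Partrec.nat_iff.mp htc.partrec)
  have hW : ∀ z : ℕ, PJI.WEfun (Nat.pair (Encodable.encode c) z) =
      Part.some (t (Nat.pair (Encodable.encode c) z)) := by
    intro z
    show Nat.Partrec.Code.eval
        (Denumerable.ofNat Nat.Partrec.Code (Nat.pair (Encodable.encode c) z).unpair.1)
        (Nat.pair (Encodable.encode c) z) = _
    rw [Nat.unpair_pair, Denumerable.ofNat_encode, hc, PFun.coe_val]
  set k : ℕ := Encodable.encode c with hkdef
  have hs01 : ∀ z, PJI.sVal f t k z = 0 ∨ PJI.sVal f t k z = 1 := fun z =>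
    Nat.mod_two_eq_zero_or_one _
  have hkey : ∀ z, ν (t (Nat.pair k z)) =
      ν (if PJI.sVal f t k z = 0 then PJI.cnt0 f t k z else z - PJI.cnt0 f t k z) := by
    intro z
    have hd : (PJI.delFun f (Nat.pair k z)).Dom := by
      rw [PJI.delFun_val hW z]; exact trivial
    have hmem : (if PJI.sVal f t k z = 0 then PJI.cnt0 f t k z else z - PJI.cnt0 f t k z) ∈
        PJI.delFun f (Nat.pair k z) := by
      rw [PJI.delFun_val hW z]; exact Part.mem_some _
    have hh := hts (Nat.pair k z) hd
    rwa [Part.get_eq_of_mem hmem hd] at hh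
  have main : ∀ s₀ : ℕ, s₀ = 0 ∨ s₀ = 1 → {z | PJI.sVal f t k z = s₀}.Infinite →
      NumRedIn h ν (if s₀ = 0 then μ₁ else μ₂) := by
    intro s₀ hs₀ hinf
    have hRdom : ∀ x : ℕ, (PJI.RFun f k s₀ x).Dom := by
      intro x
      have h1 : PJI.sVal f t k (Nat.nth (fun z => PJI.sVal f t k z = s₀) x) = s₀ :=
        Nat.nth_mem_of_infinite hinf x
      have h2 : Nat.count (fun z => PJI.sVal f t k z = s₀)
          (Nat.nth (fun z => PJI.sVal f t k z = s₀) x) = x :=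
        Nat.count_nth_of_infinite hinf x
      have h3 : (if s₀ = 0 then PJI.cnt0 f t k (Nat.nth (fun z => PJI.sVal f t k z = s₀) x)
          else (Nat.nth (fun z => PJI.sVal f t k z = s₀) x) -
            PJI.cnt0 f t k (Nat.nth (fun z => PJI.sVal f t k z = s₀) x)) = x := by
        rcases hs₀ with h0 | h0 <;> subst h0
        · simpa [PJI.cnt0] using h2
        · rw [if_neg one_ne_zero]
          show Nat.nth (fun z => PJI.sVal f t k z = 1) x -
              Nat.count (fun y => PJI.sVal f t k y = 0)
                (Nat.nth (fun z => PJI.sVal f t k z = 1) x) = x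
          rw [← PJI.count_one_eq hs01]
          exact h2
      show (Nat.rfind fun n => (fun m => m = 0) <$> PJI.QFun f k s₀ (Nat.pair x n)).Dom
      refine Nat.rfind_dom.mpr ?_
      refine ⟨Nat.nth (fun z => PJI.sVal f t k z = s₀) x, ?_, ?_⟩
      · rw [PJI.QFun_val hW s₀ x _]
        simp [h1, h3, Part.mem_map_iff]
      · intro m _
        rw [PJI.QFun_val hW s₀ x m]
        simp
    set r : ℕ → ℕ := fun x => (PJI.RFun f k s₀ x).get (hRdom x) with hrdef
    have hrprop : ∀ x, PJI.sVal f t k (r x) = s₀ ∧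
        (if s₀ = 0 then PJI.cnt0 f t k (r x) else r x - PJI.cnt0 f t k (r x)) = x := by
      intro x
      have hmem : r x ∈ PJI.RFun f k s₀ x := Part.get_mem (hRdom x)
      have hspec := Nat.rfind_spec hmem
      rw [PJI.QFun_val hW s₀ x (r x)] at hspec
      by_cases hcond : (PJI.sVal f t k (r x) = s₀ ∧
          (if s₀ = 0 then PJI.cnt0 f t k (r x) else r x - PJI.cnt0 f t k (r x)) = x)
      · exact hcond
      · exfalso
        rw [if_neg hcond] at hspec
        simp [Part.mem_map_iff] at hspec
    refine ⟨fun x => f (t (Nat.pair k (r x))) / 2, ?_, ?_⟩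
    · have hGeq : PFun.lift (fun x : ℕ => f (t (Nat.pair k (r x))) / 2) = PJI.GFun f t k s₀ := by
        funext x
        have hsome : PJI.RFun f k s₀ x = Part.some (r x) := (Part.some_get (hRdom x)).symm
        simp [PJI.GFun, hsome, Part.bind_eq_bind, Part.bind_some, PFun.coe_val, PFun.lift,
          PJI.bind_pfun, PJI.some_bind_pfun]
      show RecursiveInOracle h (PFun.lift (fun x : ℕ => f (t (Nat.pair k (r x))) / 2))
      rw [hGeq]
      exact PJI.GFun_recIn hfrec htc k s₀
    · intro x
      obtain ⟨hra, hrb⟩ := hrprop x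
      have h2 : ν (t (Nat.pair k (r x))) = ν x := by
        rw [hkey (r x)]
        rcases hs₀ with h0 | h0 <;> subst h0
        · rw [if_pos hra]
          rw [show PJI.cnt0 f t k (r x) = x by simpa using hrb]
        · rw [if_neg (by rw [hra]; exact one_ne_zero)]
          rw [show r x - PJI.cnt0 f t k (r x) = x by simpa using hrb]
      have h3 := hfred (t (Nat.pair k (r x)))
      rcases hs₀ with h0 | h0 <;> subst h0
      · rw [if_pos rfl, ← h2, h3]
        have hpar : f (t (Nat.pair k (r x))) % 2 = 0 := hra
        simp [NumJoin, hpar]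
      · rw [if_neg one_ne_zero, ← h2, h3]
        have hpar : f (t (Nat.pair k (r x))) % 2 = 1 := hra
        simp [NumJoin, hpar]
  rcases Classical.em ({z | PJI.sVal f t k z = 0}.Infinite) with hinf | hnotinf
  · left
    simpa using main 0 (Or.inl rfl) hinf
  · right
    have hfin : {z | PJI.sVal f t k z = 0}.Finite := Set.not_infinite.mp hnotinf
    have hinf1 : {z | PJI.sVal f t k z = 1}.Infinite := by
      have hcompl := hfin.infinite_compl
      have hset : {z | PJI.sVal f t k z = 0}ᶜ = {z | PJI.sVal f t k z = 1} := by
        ext z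
        simp only [Set.mem_compl_iff, Set.mem_setOf_eq]
        constructor
        · intro hz
          rcases hs01 z with h0 | h0
          · exact absurd h0 hz
          · exact h0
        · intro hz
          rw [hz]
          exact one_ne_zero
      rwa [hset] at hcompl
    simpa using main 1 (Or.inr rfl) hinf1
end

section
/- For h-precomplete numberings μ and ν of a set S: μ ≤^h ν implies μ ≤ ν (reducibility with oracle h implies plain computable reducibility). -/
/-- for `h`-precomplete numberings, `≤^h` implies plain `≤`. -/
theorem precomplete_redIn_iff_red {S : Type*} (h : ℕ → ℕ) (μ ν : ℕ → S)
    (hμ : Precomplete h μ) (hν : Precomplete h ν) (hred : NumRedIn h μ ν) :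
    NumRed μ ν := by
  obtain ⟨f, hf, hfn⟩ := hred
  obtain ⟨t, ht, htot⟩ := hν (↑f) hf
  refine ⟨t, ht, fun n => ?_⟩
  have hd : ((↑f : ℕ →. ℕ) n).Dom := trivial
  have := htot n hd
  simp only [PFun.coe_val, Part.get_some] at this
  rw [hfn n, ← this]
end
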